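/- arXiv:1004.4671 — 4 statements merged into one kernel-verified Lean document; each statement's English description precedes it below -/
import Mathlib

section
/- Let ψ(z) = (1/2)σ²z² + μz + z² Σ_{n≥1} a_n/(ρ_n(ρ_n − z)) + z² Σ_{n≥1} â_n/(ρ̂_n(ρ̂_n + z)), where σ, μ ∈ ℝ, all a_n, â_n, ρ_n, ρ̂_n > 0, (ρ_n), (ρ̂_n) strictly increase to ∞, and Σ a_n ρ_n^{-2} < ∞, Σ â_n ρ̂_n^{-2} < ∞. Then for every z in the open upper half-plane (Im z > 0) with z ∉ {ρ_n} ∪ {−ρ̂_n}, one has Im(ψ(z)/z) > 0, provided σ² + μ·0 ≠ 0 or some a_n > 0 or some â_n > 0 (i.e. ψ is not identically of the form μz with the pure-drift part only, in which case Im(ψ(z)/z) = 0). -/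
open Real Filter Complex

/-- Summability of the partial-fraction series away from the real axis. -/
lemma summable_aux (a ρ : ℕ → ℝ) (ha : ∀ n, 0 < a n) (hρpos : ∀ n, 0 < ρ n)
    (hρtop : Tendsto ρ atTop atTop)
    (hsum : Summable (fun n => a n / (ρ n) ^ 2)) (z : ℂ) :
    Summable (fun n => (a n : ℂ) / ((ρ n : ℂ) * ((ρ n : ℂ) - z))) := by
  apply Summable.of_norm_bounded_eventually_nat (g := fun n => 2 * (a n / (ρ n) ^ 2))
    (hsum.mul_left 2)
  filter_upwards [hρtop.eventually_ge_atTop (2 * ‖z‖)] with n hn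
  have hρ := hρpos n
  have han := (ha n).le
  have hd : ρ n / 2 ≤ ‖(ρ n : ℂ) - z‖ := by
    have := norm_sub_norm_le (ρ n : ℂ) z
    have hnr : ‖(ρ n : ℂ)‖ = ρ n := by
      rw [Complex.norm_real, Real.norm_eq_abs, abs_of_pos hρ]
    rw [hnr] at this
    linarith
  have hdpos : (0 : ℝ) < ‖(ρ n : ℂ) - z‖ := lt_of_lt_of_le (by positivity) hd
  rw [norm_div, norm_mul]
  have hnr : ‖(ρ n : ℂ)‖ = ρ n := by
    rw [Complex.norm_real, Real.norm_eq_abs, abs_of_pos hρ]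
  have hna : ‖(a n : ℂ)‖ = a n := by
    rw [Complex.norm_real, Real.norm_eq_abs, abs_of_pos (ha n)]
  rw [hnr, hna]
  rw [div_le_iff₀ (by positivity)]
  have key : 2 * (a n / ρ n ^ 2) * (ρ n * (ρ n / 2)) = a n := by
    field_simp
  calc a n = 2 * (a n / ρ n ^ 2) * (ρ n * (ρ n / 2)) := key.symm
    _ ≤ 2 * (a n / ρ n ^ 2) * (ρ n * ‖(ρ n : ℂ) - z‖) := by
        apply mul_le_mul_of_nonneg_left
        · exact mul_le_mul_of_nonneg_left hd hρ.le
        · positivity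

/-- Positivity of the imaginary part of each term. -/
lemma im_term_pos (r x : ℝ) (hr : 0 < r) (hx : 0 < x) (z : ℂ) (hz : 0 < z.im) :
    0 < (z * ((x : ℂ) / ((r : ℂ) * ((r : ℂ) - z)))).im := by
  have hne : (r : ℂ) - z ≠ 0 := by
    intro h
    have : ((r : ℂ) - z).im = 0 := by rw [h]; simp
    simp at this
    exact (ne_of_gt hz) (by linarith [this])
  have hnsq : 0 < Complex.normSq ((r : ℂ) - z) := Complex.normSq_pos.2 hne
  have heq : z * ((x : ℂ) / ((r : ℂ) * ((r : ℂ) - z))) =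
      ((x / r : ℝ) : ℂ) * (z / ((r : ℂ) - z)) := by
    push_cast
    field_simp
  rw [heq]
  have him : (z / ((r : ℂ) - z)).im = r * z.im / Complex.normSq ((r : ℂ) - z) := by
    rw [Complex.div_im]
    simp [Complex.sub_re, Complex.sub_im, Complex.ofReal_re, Complex.ofReal_im]
    ring
  rw [Complex.im_ofReal_mul, him]
  positivity

/-- Positivity of the imaginary part of each term, `r + z` version. -/
lemma im_term_pos' (r x : ℝ) (hr : 0 < r) (hx : 0 < x) (z : ℂ) (hz : 0 < z.im) :
    0 < (z * ((x : ℂ) / ((r : ℂ) * ((r : ℂ) + z)))).im := by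
  have hne : (r : ℂ) + z ≠ 0 := by
    intro h
    have : ((r : ℂ) + z).im = 0 := by rw [h]; simp
    simp at this
    exact (ne_of_gt hz) (by linarith [this])
  have hnsq : 0 < Complex.normSq ((r : ℂ) + z) := Complex.normSq_pos.2 hne
  have heq : z * ((x : ℂ) / ((r : ℂ) * ((r : ℂ) + z))) =
      ((x / r : ℝ) : ℂ) * (z / ((r : ℂ) + z)) := by
    push_cast
    field_simp
  rw [heq]
  have him : (z / ((r : ℂ) + z)).im = r * z.im / Complex.normSq ((r : ℂ) + z) := by
    rw [Complex.div_im]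
    simp [Complex.add_re, Complex.add_im, Complex.ofReal_re, Complex.ofReal_im]
    ring
  rw [Complex.im_ofReal_mul, him]
  positivity

/-- Herglotz property of the Laplace exponent of a meromorphic Lévy process: with
`ψ(z) = σ²z²/2 + μz + z² Σ aₙ/(ρₙ(ρₙ−z)) + z² Σ âₙ/(ρ̂ₙ(ρ̂ₙ+z))`, one has
`Im(ψ(z)/z) > 0` for every `z` in the open upper half-plane avoiding the poles,
provided `ψ` is not a pure drift. -/
theorem laplace_exponent_herglotz
    (σ μ : ℝ) (a ahat ρ ρhat : ℕ → ℝ) (ψ : ℂ → ℂ)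
    (ha : ∀ n, 0 < a n) (hahat : ∀ n, 0 < ahat n)
    (hρpos : ∀ n, 0 < ρ n) (hρhatpos : ∀ n, 0 < ρhat n)
    (hρmono : StrictMono ρ) (hρhatmono : StrictMono ρhat)
    (hρtop : Tendsto ρ atTop atTop) (hρhattop : Tendsto ρhat atTop atTop)
    (hsum : Summable (fun n => a n / (ρ n) ^ 2))
    (hsumhat : Summable (fun n => ahat n / (ρhat n) ^ 2))
    (hψ : ∀ z : ℂ, (∀ n, z ≠ (ρ n : ℂ) ∧ z ≠ -(ρhat n : ℂ)) →
      ψ z = (1 / 2) * (σ : ℂ) ^ 2 * z ^ 2 + (μ : ℂ) * z +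
        z ^ 2 * ∑' n, (a n : ℂ) / ((ρ n : ℂ) * ((ρ n : ℂ) - z)) +
        z ^ 2 * ∑' n, (ahat n : ℂ) / ((ρhat n : ℂ) * ((ρhat n : ℂ) + z)))
    (hnontriv : σ ^ 2 ≠ 0 ∨ (∃ n, 0 < a n) ∨ (∃ n, 0 < ahat n)) :
    ∀ z : ℂ, 0 < z.im → (∀ n, z ≠ (ρ n : ℂ) ∧ z ≠ -(ρhat n : ℂ)) →
      0 < (ψ z / z).im := by
  intro z hzim hpole
  have hz0 : z ≠ 0 := by
    intro h; rw [h] at hzim; simp at hzim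
  set S : ℂ := ∑' n, (a n : ℂ) / ((ρ n : ℂ) * ((ρ n : ℂ) - z)) with hS
  set T : ℂ := ∑' n, (ahat n : ℂ) / ((ρhat n : ℂ) * ((ρhat n : ℂ) + z)) with hT
  have hdiv : ψ z / z = (1 / 2) * (σ : ℂ) ^ 2 * z + (μ : ℂ) + z * S + z * T := by
    rw [hψ z hpole]
    field_simp
    ring
  rw [hdiv]
  -- summability of the two series of terms multiplied by z
  have hs1 : Summable (fun n => z * ((a n : ℂ) / ((ρ n : ℂ) * ((ρ n : ℂ) - z)))) :=
    (summable_aux a ρ ha hρpos hρtop hsum z).mul_left z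
  have hs2 : Summable (fun n => z * ((ahat n : ℂ) / ((ρhat n : ℂ) * ((ρhat n : ℂ) + z)))) := by
    have := (summable_aux ahat ρhat hahat hρhatpos hρhattop hsumhat (-z)).mul_left z
    simpa [sub_neg_eq_add] using this
  have hzS : z * S = ∑' n, z * ((a n : ℂ) / ((ρ n : ℂ) * ((ρ n : ℂ) - z))) :=
    (tsum_mul_left).symm
  have hzT : z * T = ∑' n, z * ((ahat n : ℂ) / ((ρhat n : ℂ) * ((ρhat n : ℂ) + z))) :=
    (tsum_mul_left).symm
  -- imaginary parts
  have himS : 0 < (z * S).im := by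
    rw [hzS, Complex.im_tsum hs1]
    apply Summable.tsum_pos (hs1.map Complex.imCLM Complex.imCLM.continuous)
      (fun n => (im_term_pos (ρ n) (a n) (hρpos n) (ha n) z hzim).le) 0
      (im_term_pos (ρ 0) (a 0) (hρpos 0) (ha 0) z hzim)
  have himT : 0 < (z * T).im := by
    rw [hzT, Complex.im_tsum hs2]
    have hterm : ∀ n, 0 < (z * ((ahat n : ℂ) / ((ρhat n : ℂ) * ((ρhat n : ℂ) + z)))).im :=
      fun n => im_term_pos' (ρhat n) (ahat n) (hρhatpos n) (hahat n) z hzim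
    exact Summable.tsum_pos (hs2.map Complex.imCLM Complex.imCLM.continuous)
      (fun n => (hterm n).le) 0 (hterm 0)
  have hquad : 0 ≤ ((1 / 2 : ℂ) * (σ : ℂ) ^ 2 * z).im := by
    have : (1 / 2 : ℂ) * (σ : ℂ) ^ 2 * z = ((σ ^ 2 / 2 : ℝ) : ℂ) * z := by
      push_cast; ring
    rw [this, Complex.im_ofReal_mul]
    positivity
  have hmu : ((μ : ℂ)).im = 0 := Complex.ofReal_im μ
  simp only [Complex.add_im, hmu]
  linarith
end

section
/- With ρ, ζ interlacing positive increasing sequences (ζ_1 < ρ_1 < ζ_2 < ρ_2 < ..., ρ_n → ∞) and φ(z) = Π_{n≥1}(1 + z/ρ_n)/(1 + z/ζ_n), define a_0 = lim_{n→∞} Π_{k=1}^n ζ_k/ρ_k and, for n ≥ 1, a_n = (1 − ζ_n/ρ_n) Π_{k≠n} (1 − ζ_n/ρ_k)/(1 − ζ_n/ζ_k). Then a_0 ≥ 0, a_n > 0 for all n ≥ 1, and for all z > 0: φ(z) = a_0 + Σ_{n≥1} a_n ζ_n/(ζ_n + z). -/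
open Real Filter Finset

section Aux

variable {ρ ζ : ℕ → ℝ}

/-- The finite partial-fraction coefficient. -/
noncomputable def ccoef (ρ ζ : ℕ → ℝ) (k N : ℕ) : ℝ :=
  (1 - ζ k / ρ k) * ∏ j ∈ (range N).erase k, (1 - ζ k / ρ j) / (1 - ζ k / ζ j)

/-- The factor function used for the coefficient products, with the diagonal set to 1. -/
noncomputable def Ffun (ρ ζ : ℕ → ℝ) (n j : ℕ) : ℝ :=
  if j = n then 1 else (1 - ζ n / ρ j) / (1 - ζ n / ζ j)

lemma zeta_mono (hinter : ∀ n, ζ n < ρ n) (hinter' : ∀ n, ρ n < ζ (n + 1)) :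
    StrictMono ζ :=
  strictMono_nat_of_lt_succ fun n => (hinter n).trans (hinter' n)

lemma rho_pos (hζpos : ∀ n, 0 < ζ n) (hinter : ∀ n, ζ n < ρ n) : ∀ n, 0 < ρ n :=
  fun n => (hζpos n).trans (hinter n)

lemma rho_lt_zeta (hinter : ∀ n, ζ n < ρ n) (hinter' : ∀ n, ρ n < ζ (n + 1))
    {j n : ℕ} (h : j < n) : ρ j < ζ n :=
  (hinter' j).trans_le ((zeta_mono hinter hinter').monotone h)

lemma term_pos (hζpos : ∀ n, 0 < ζ n) (hinter : ∀ n, ζ n < ρ n)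
    (hinter' : ∀ n, ρ n < ζ (n + 1)) {n j : ℕ} (h : j ≠ n) :
    0 < (1 - ζ n / ρ j) / (1 - ζ n / ζ j) := by
  rcases lt_or_gt_of_ne h with hj | hj
  · have h1 : ζ n / ρ j > 1 := (one_lt_div (rho_pos hζpos hinter j)).2
      (rho_lt_zeta hinter hinter' hj)
    have h2 : ζ n / ζ j > 1 := (one_lt_div (hζpos j)).2 (zeta_mono hinter hinter' hj)
    exact div_pos_of_neg_of_neg (by linarith) (by linarith)
  · have h1 : ζ n / ζ j < 1 := (div_lt_one (hζpos j)).2 (zeta_mono hinter hinter' hj)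
    have h2 : ζ n / ρ j < 1 := (div_lt_one (rho_pos hζpos hinter j)).2
      ((zeta_mono hinter hinter' hj).trans (hinter j))
    exact div_pos (by linarith) (by linarith)

lemma ccoef_pos (hζpos : ∀ n, 0 < ζ n) (hinter : ∀ n, ζ n < ρ n)
    (hinter' : ∀ n, ρ n < ζ (n + 1)) (k N : ℕ) : 0 < ccoef ρ ζ k N := by
  refine mul_pos ?_ (Finset.prod_pos fun j hj =>
    term_pos hζpos hinter hinter' (Finset.ne_of_mem_erase hj))
  have : ζ k / ρ k < 1 := (div_lt_one (rho_pos hζpos hinter k)).2 (hinter k)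
  linarith

/-- Summability of the gap sequence `1/ζ n - 1/ρ n`. -/
lemma summable_gap (hζpos : ∀ n, 0 < ζ n) (hinter : ∀ n, ζ n < ρ n)
    (hinter' : ∀ n, ρ n < ζ (n + 1)) :
    Summable (fun n => 1 / ζ n - 1 / ρ n) := by
  have hρpos := rho_pos hζpos hinter
  have hnn : ∀ n, 0 ≤ 1 / ζ n - 1 / ρ n := fun n => by
    have := one_div_le_one_div_of_le (hζpos n) (hinter n).le
    linarith
  refine summable_of_sum_range_le (c := 1 / ζ 0) hnn fun n => ?_
  have hle : ∀ i, 1 / ζ i - 1 / ρ i ≤ 1 / ζ i - 1 / ζ (i + 1) := fun i => by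
    have := one_div_le_one_div_of_le (hρpos i) (hinter' i).le
    linarith
  calc ∑ i ∈ range n, (1 / ζ i - 1 / ρ i)
      ≤ ∑ i ∈ range n, (1 / ζ i - 1 / ζ (i + 1)) := Finset.sum_le_sum fun i _ => hle i
    _ = 1 / ζ 0 - 1 / ζ n := Finset.sum_range_sub' (fun i => 1 / ζ i) n
    _ ≤ 1 / ζ 0 := by
        have : 0 < 1 / ζ n := one_div_pos.2 (hζpos n)
        linarith

/-- A positive sequence with summable logs has a product (equal to an exponential). -/
lemma hasProd_of_summable_log {f : ℕ → ℝ} (h1 : ∀ n, 0 < f n)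
    (h2 : Summable fun n => Real.log (f n)) :
    HasProd f (Real.exp (∑' n, Real.log (f n))) := by
  have := h2.hasSum.rexp
  refine this.congr fun s => Finset.prod_congr rfl fun x _ => ?_
  simp [Function.comp, Real.exp_log (h1 x)]

lemma summable_logA (hζpos : ∀ n, 0 < ζ n) (hinter : ∀ n, ζ n < ρ n)
    (hinter' : ∀ n, ρ n < ζ (n + 1)) {z : ℝ} (hz : 0 < z) :
    Summable fun n => Real.log ((1 + z / ρ n) / (1 + z / ζ n)) := by
  have hρpos := rho_pos hζpos hinter
  have hd1 : ∀ n, (0:ℝ) < 1 + z / ρ n := fun n => by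
    have : 0 < z / ρ n := div_pos hz (hρpos n); linarith
  have hd2 : ∀ n, (0:ℝ) < 1 + z / ζ n := fun n => by
    have : 0 < z / ζ n := div_pos hz (hζpos n); linarith
  have hdiv : ∀ n, z / ρ n ≤ z / ζ n := fun n =>
    div_le_div_of_nonneg_left hz.le (hζpos n) (hinter n).le
  have hfle1 : ∀ n, (1 + z / ρ n) / (1 + z / ζ n) ≤ 1 := fun n =>
    (div_le_one (hd2 n)).2 (by linarith [hdiv n])
  have hkey : ∀ n, -Real.log ((1 + z / ρ n) / (1 + z / ζ n)) ≤ z * (1 / ζ n - 1 / ρ n) := by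
    intro n
    have hinv : ((1 + z / ρ n) / (1 + z / ζ n))⁻¹ = (1 + z / ζ n) / (1 + z / ρ n) :=
      inv_div _ _
    have h1 : Real.log ((1 + z / ζ n) / (1 + z / ρ n))
        ≤ (1 + z / ζ n) / (1 + z / ρ n) - 1 :=
      Real.log_le_sub_one_of_pos (div_pos (hd2 n) (hd1 n))
    have h2 : (1 + z / ζ n) / (1 + z / ρ n) - 1 = (z / ζ n - z / ρ n) / (1 + z / ρ n) := by
      rw [div_sub_one (ne_of_gt (hd1 n))]; congr 1; ring
    have h3 : (z / ζ n - z / ρ n) / (1 + z / ρ n) ≤ z / ζ n - z / ρ n :=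
      div_le_self (by linarith [hdiv n]) (by
        have : 0 < z / ρ n := div_pos hz (hρpos n); linarith)
    have h4 : z / ζ n - z / ρ n = z * (1 / ζ n - 1 / ρ n) := by ring
    calc -Real.log ((1 + z / ρ n) / (1 + z / ζ n))
        = Real.log (((1 + z / ρ n) / (1 + z / ζ n))⁻¹) := (Real.log_inv _).symm
      _ = Real.log ((1 + z / ζ n) / (1 + z / ρ n)) := by rw [hinv]
      _ ≤ (1 + z / ζ n) / (1 + z / ρ n) - 1 := h1
      _ = (z / ζ n - z / ρ n) / (1 + z / ρ n) := h2
      _ ≤ z / ζ n - z / ρ n := h3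
      _ = z * (1 / ζ n - 1 / ρ n) := h4
  have hneg : Summable fun n => -Real.log ((1 + z / ρ n) / (1 + z / ζ n)) := by
    refine Summable.of_nonneg_of_le (fun n => ?_) hkey
      ((summable_gap hζpos hinter hinter').mul_left z)
    have := Real.log_nonpos (le_of_lt (div_pos (hd1 n) (hd2 n))) (hfle1 n)
    linarith
  exact summable_neg_iff.mp hneg

lemma Ffun_pos (hζpos : ∀ n, 0 < ζ n) (hinter : ∀ n, ζ n < ρ n)
    (hinter' : ∀ n, ρ n < ζ (n + 1)) (n j : ℕ) : 0 < Ffun ρ ζ n j := by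
  rw [Ffun]
  split
  · exact one_pos
  · exact term_pos hζpos hinter hinter' (by assumption)

lemma summable_logF (hζpos : ∀ n, 0 < ζ n) (hinter : ∀ n, ζ n < ρ n)
    (hinter' : ∀ n, ρ n < ζ (n + 1)) (n : ℕ) :
    Summable fun j => Real.log (Ffun ρ ζ n j) := by
  have hζmono := zeta_mono hinter hinter'
  have hρpos := rho_pos hζpos hinter
  refine (summable_nat_add_iff (n + 1)).mp ?_
  set δ : ℝ := 1 - ζ n / ζ (n + 1) with hδ
  have hδpos : 0 < δ := by
    have : ζ n / ζ (n + 1) < 1 := (div_lt_one (hζpos (n + 1))).2 (hζmono (Nat.lt_succ_self n))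
    rw [hδ]; linarith
  have hFF : ∀ j : ℕ, Ffun ρ ζ n (j + (n + 1))
      = (1 - ζ n / ρ (j + (n + 1))) / (1 - ζ n / ζ (j + (n + 1))) := fun j =>
    if_neg (by omega)
  have hden : ∀ j : ℕ, δ ≤ 1 - ζ n / ζ (j + (n + 1)) := by
    intro j
    have h1 : ζ (n + 1) ≤ ζ (j + (n + 1)) := hζmono.monotone (by omega)
    have h2 : ζ n / ζ (j + (n + 1)) ≤ ζ n / ζ (n + 1) :=
      div_le_div_of_nonneg_left (hζpos n).le (hζpos (n + 1)) h1
    rw [hδ]; linarith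
  have hdenpos : ∀ j : ℕ, (0:ℝ) < 1 - ζ n / ζ (j + (n + 1)) := fun j =>
    lt_of_lt_of_le hδpos (hden j)
  have hone_le : ∀ j : ℕ, 1 ≤ Ffun ρ ζ n (j + (n + 1)) := by
    intro j
    rw [hFF j]
    refine (one_le_div (hdenpos j)).2 ?_
    have : ζ n / ρ (j + (n + 1)) ≤ ζ n / ζ (j + (n + 1)) :=
      div_le_div_of_nonneg_left (hζpos n).le (hζpos _) (hinter _).le
    linarith
  have hkey : ∀ j : ℕ, Real.log (Ffun ρ ζ n (j + (n + 1)))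
      ≤ (ζ n / δ) * (1 / ζ (j + (n + 1)) - 1 / ρ (j + (n + 1))) := by
    intro j
    set m := j + (n + 1) with hm
    have h1 : Real.log (Ffun ρ ζ n m) ≤ Ffun ρ ζ n m - 1 :=
      Real.log_le_sub_one_of_pos (lt_of_lt_of_le one_pos (hone_le j))
    have h2 : Ffun ρ ζ n m - 1 = (ζ n / ζ m - ζ n / ρ m) / (1 - ζ n / ζ m) := by
      rw [hFF j, div_sub_one (ne_of_gt (hdenpos j))]; congr 1; ring
    have hnum : 0 ≤ ζ n / ζ m - ζ n / ρ m := by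
      have : ζ n / ρ m ≤ ζ n / ζ m :=
        div_le_div_of_nonneg_left (hζpos n).le (hζpos m) (hinter m).le
      linarith
    have h3 : (ζ n / ζ m - ζ n / ρ m) / (1 - ζ n / ζ m) ≤ (ζ n / ζ m - ζ n / ρ m) / δ :=
      div_le_div_of_nonneg_left hnum hδpos (hden j)
    have h4 : (ζ n / ζ m - ζ n / ρ m) / δ = (ζ n / δ) * (1 / ζ m - 1 / ρ m) := by ring
    calc Real.log (Ffun ρ ζ n m) ≤ Ffun ρ ζ n m - 1 := h1
      _ = (ζ n / ζ m - ζ n / ρ m) / (1 - ζ n / ζ m) := h2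
      _ ≤ (ζ n / ζ m - ζ n / ρ m) / δ := h3
      _ = (ζ n / δ) * (1 / ζ m - 1 / ρ m) := h4
  refine Summable.of_nonneg_of_le (fun j => Real.log_nonneg (hone_le j)) hkey ?_
  exact ((summable_nat_add_iff (n + 1)).2
    (summable_gap hζpos hinter hinter')).mul_left (ζ n / δ)

lemma ccoef_succ (ρ ζ : ℕ → ℝ) {k N : ℕ} (h : k < N) :
    ccoef ρ ζ k (N + 1) = ccoef ρ ζ k N * ((1 - ζ k / ρ N) / (1 - ζ k / ζ N)) := by
  have hkN : k ≠ N := ne_of_lt h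
  have hNer : N ∉ (range N).erase k := fun hh => notMem_range_self (mem_of_mem_erase hh)
  rw [ccoef, range_add_one, erase_insert_of_ne (Ne.symm hkN), prod_insert hNer, ccoef]
  ring

lemma ccoef_F (ρ ζ : ℕ → ℝ) (n N : ℕ) :
    ccoef ρ ζ n N = (1 - ζ n / ρ n) * ∏ j ∈ range N, Ffun ρ ζ n j := by
  rw [ccoef]
  congr 1
  calc ∏ j ∈ (range N).erase n, (1 - ζ n / ρ j) / (1 - ζ n / ζ j)
      = ∏ j ∈ (range N).erase n, Ffun ρ ζ n j :=
        Finset.prod_congr rfl fun j hj => (if_neg (Finset.ne_of_mem_erase hj)).symm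
    _ = ∏ j ∈ range N, Ffun ρ ζ n j := Finset.prod_erase _ (if_pos rfl)

lemma finID (hζpos : ∀ n, 0 < ζ n) (hinter : ∀ n, ζ n < ρ n)
    (hinter' : ∀ n, ρ n < ζ (n + 1)) :
    ∀ N : ℕ, ∀ z : ℝ, (∀ j, j < N → ζ j + z ≠ 0) →
      ∏ k ∈ range N, (1 + z / ρ k) / (1 + z / ζ k)
        = (∏ k ∈ range N, ζ k / ρ k)
          + ∑ k ∈ range N, ccoef ρ ζ k N * (ζ k / (ζ k + z)) := by
  have hζmono : StrictMono ζ := zeta_mono hinter hinter'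
  have hρpos : ∀ n, 0 < ρ n := rho_pos hζpos hinter
  intro N
  induction N with
  | zero => simp
  | succ N IH =>
    intro z hz
    have hzN : ζ N + z ≠ 0 := hz N (Nat.lt_succ_self N)
    have hζN := hζpos N
    have hρN := hρpos N
    have hIH := IH z (fun j hj => hz j (hj.trans (Nat.lt_succ_self N)))
    have hIH' := IH (-ζ N) (fun j hj => by
      have : ζ j < ζ N := hζmono hj
      intro hc; rw [add_neg_eq_zero] at hc; exact absurd hc (ne_of_lt this))
    simp only [neg_div, ← sub_eq_add_neg] at hIH'
    have hden : (1 : ℝ) + z / ζ N ≠ 0 := by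
      have h : (1 : ℝ) + z / ζ N = (ζ N + z) / ζ N := by field_simp
      rw [h]; exact div_ne_zero hzN (ne_of_gt hζN)
    have hccN : ccoef ρ ζ N (N + 1)
        = (1 - ζ N / ρ N) * ((∏ k ∈ range N, ζ k / ρ k)
            + ∑ k ∈ range N, ccoef ρ ζ k N * (ζ k / (ζ k - ζ N))) := by
      rw [ccoef, range_add_one, erase_insert notMem_range_self, ← hIH']
    have hfNsplit : (1 + z / ρ N) / (1 + z / ζ N)
        = ζ N / ρ N + (1 - ζ N / ρ N) * (ζ N / (ζ N + z)) := by
      field_simp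
      ring
    have hterm : ∀ k ∈ range N,
        ccoef ρ ζ k N * (ζ k / (ζ k + z)) * ((1 + z / ρ N) / (1 + z / ζ N))
          = ccoef ρ ζ k N * ((1 - ζ k / ρ N) / (1 - ζ k / ζ N)) * (ζ k / (ζ k + z))
            + ccoef ρ ζ k N * (ζ k / (ζ k - ζ N))
              * ((1 - ζ N / ρ N) * (ζ N / (ζ N + z))) := by
      intro k hk
      have hk' := mem_range.mp hk
      have hζk := hζpos k
      have hρk := hρpos k
      have hzk : ζ k + z ≠ 0 := hz k (hk'.trans (Nat.lt_succ_self N))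
      have hkN : ζ k < ζ N := hζmono hk'
      have hsub : ζ N - ζ k ≠ 0 := sub_ne_zero.2 (ne_of_gt hkN)
      have hsub' : ζ k - ζ N ≠ 0 := sub_ne_zero.2 (ne_of_lt hkN)
      have e1 : (1 : ℝ) + z / ρ N = (ρ N + z) / ρ N := by field_simp
      have e2 : (1 : ℝ) + z / ζ N = (ζ N + z) / ζ N := by field_simp
      have e3 : (1 : ℝ) - ζ k / ρ N = (ρ N - ζ k) / ρ N := by field_simp
      have e4 : (1 : ℝ) - ζ k / ζ N = (ζ N - ζ k) / ζ N := by field_simp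
      have e5 : (1 : ℝ) - ζ N / ρ N = (ρ N - ζ N) / ρ N := by field_simp
      rw [e1, e2, e3, e4, e5]
      rw [div_div_div_eq, div_div_div_eq]
      field_simp
      ring
    rw [prod_range_succ, prod_range_succ, sum_range_succ, hIH]
    have hsum1 : ∑ x ∈ range N, ccoef ρ ζ x (N + 1) * (ζ x / (ζ x + z))
        = ∑ x ∈ range N, ccoef ρ ζ x N * ((1 - ζ x / ρ N) / (1 - ζ x / ζ N))
            * (ζ x / (ζ x + z)) :=
      Finset.sum_congr rfl fun k hk => by rw [ccoef_succ ρ ζ (mem_range.mp hk)]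
    rw [hsum1, hccN, add_mul, Finset.sum_mul, Finset.sum_congr rfl hterm,
      Finset.sum_add_distrib, ← Finset.sum_mul, hfNsplit]
    ring

end Aux

/-- Partial fraction decomposition of the interlacing infinite product:
`φ(z) = a₀ + Σₙ aₙ ζₙ/(ζₙ + z)` for `z > 0`, with `a₀ ≥ 0` and `aₙ > 0`. -/
theorem interlacing_product_partial_fractions
    (ρ ζ : ℕ → ℝ) (a0 : ℝ) (a : ℕ → ℝ)
    (hζpos : ∀ n, 0 < ζ n)
    (hinter : ∀ n, ζ n < ρ n) (hinter' : ∀ n, ρ n < ζ (n + 1))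
    (hρtop : Tendsto ρ atTop atTop)
    (ha0 : Tendsto (fun n => ∏ k ∈ range n, ζ k / ρ k) atTop (nhds a0))
    (ha : ∀ n, a n = (1 - ζ n / ρ n) *
      ∏' k : {k : ℕ // k ≠ n}, (1 - ζ n / ρ (k : ℕ)) / (1 - ζ n / ζ (k : ℕ))) :
    0 ≤ a0 ∧ (∀ n, 0 < a n) ∧
      ∀ z : ℝ, 0 < z →
        (∏' n, (1 + z / ρ n) / (1 + z / ζ n)) = a0 + ∑' n, a n * (ζ n / (ζ n + z)) := by
  have hζmono : StrictMono ζ := zeta_mono hinter hinter'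
  have hρpos : ∀ n, 0 < ρ n := rho_pos hζpos hinter
  -- Products for `Ffun`
  have hProdF : ∀ n, HasProd (Ffun ρ ζ n)
      (Real.exp (∑' j, Real.log (Ffun ρ ζ n j))) := fun n =>
    hasProd_of_summable_log (Ffun_pos hζpos hinter hinter' n)
      (summable_logF hζpos hinter hinter' n)
  -- a n in terms of Ffun
  have haeq : ∀ n, a n = (1 - ζ n / ρ n) * ∏' j, Ffun ρ ζ n j := by
    intro n
    rw [ha n]
    congr 1
    have hsub : (∏' k : {k : ℕ // k ≠ n}, (1 - ζ n / ρ (k : ℕ)) / (1 - ζ n / ζ (k : ℕ)))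
        = ∏' j : ℕ, Set.mulIndicator {k : ℕ | k ≠ n}
            (fun j => (1 - ζ n / ρ j) / (1 - ζ n / ζ j)) j := by
      exact _root_.tprod_subtype {k : ℕ | k ≠ n}
        (fun j => (1 - ζ n / ρ j) / (1 - ζ n / ζ j))
    rw [hsub]
    refine tprod_congr fun j => ?_
    by_cases h : j = n <;> simp [Ffun, Set.mulIndicator, h]
  have honesub : ∀ n, 0 < 1 - ζ n / ρ n := fun n => by
    have : ζ n / ρ n < 1 := (div_lt_one (hρpos n)).2 (hinter n)
    linarith
  have hapos : ∀ n, 0 < a n := by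
    intro n
    rw [haeq n, (hProdF n).tprod_eq]
    exact mul_pos (honesub n) (Real.exp_pos _)
  -- convergence of coefficients
  have hctend : ∀ n, Tendsto (fun N => ccoef ρ ζ n N) atTop (nhds (a n)) := by
    intro n
    have h0 : Tendsto (fun N => ∏ j ∈ range N, Ffun ρ ζ n j) atTop
        (nhds (∏' j, Ffun ρ ζ n j)) := by
      rw [(hProdF n).tprod_eq]; exact (hProdF n).tendsto_prod_nat
    have h := h0.const_mul (1 - ζ n / ρ n)
    rw [haeq n]
    refine h.congr fun N => ?_
    rw [ccoef_F]
  -- monotonicity of coefficients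
  have hccmono : ∀ k N M, k < N → N ≤ M → ccoef ρ ζ k N ≤ ccoef ρ ζ k M := by
    intro k N M hk h
    induction M, h using Nat.le_induction with
    | base => exact le_refl _
    | succ M hNM ih =>
      refine le_trans ih ?_
      have hkM : k < M := lt_of_lt_of_le hk hNM
      rw [ccoef_succ ρ ζ hkM]
      refine le_mul_of_one_le_right (ccoef_pos hζpos hinter hinter' k M).le ?_
      have hkMζ : ζ k < ζ M := hζmono hkM
      have hdpos : (0:ℝ) < 1 - ζ k / ζ M := by
        have : ζ k / ζ M < 1 := (div_lt_one (hζpos M)).2 hkMζ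
        linarith
      refine (one_le_div hdpos).2 ?_
      have : ζ k / ρ M ≤ ζ k / ζ M :=
        div_le_div_of_nonneg_left (hζpos k).le (hζpos M) (hinter M).le
      linarith
  have hcc_le_a : ∀ k N, k < N → ccoef ρ ζ k N ≤ a k := by
    intro k N h
    refine ge_of_tendsto (hctend k) (eventually_atTop.2 ⟨N, fun M hM => ?_⟩)
    exact hccmono k N M h hM
  refine ⟨?_, hapos, ?_⟩
  · exact ge_of_tendsto' ha0 fun n =>
      Finset.prod_nonneg fun k _ => div_nonneg (hζpos k).le (hρpos k).le
  intro z hzpos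
  have hzne : ∀ j : ℕ, ζ j + z ≠ 0 := fun j => ne_of_gt (add_pos (hζpos j) hzpos)
  have hgpos : ∀ k, 0 < ζ k / (ζ k + z) := fun k =>
    div_pos (hζpos k) (add_pos (hζpos k) hzpos)
  have hfpos : ∀ n, 0 < (1 + z / ρ n) / (1 + z / ζ n) := fun n => by
    have h1 : 0 < z / ρ n := div_pos hzpos (hρpos n)
    have h2 : 0 < z / ζ n := div_pos hzpos (hζpos n)
    exact div_pos (by linarith) (by linarith)
  have hf : HasProd (fun n => (1 + z / ρ n) / (1 + z / ζ n))
      (Real.exp (∑' n, Real.log ((1 + z / ρ n) / (1 + z / ζ n)))) :=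
    hasProd_of_summable_log hfpos (summable_logA hζpos hinter hinter' hzpos)
  have hPtend : Tendsto (fun N => ∏ k ∈ range N, (1 + z / ρ k) / (1 + z / ζ k))
      atTop (nhds (∏' n, (1 + z / ρ n) / (1 + z / ζ n))) := by
    rw [hf.tprod_eq]; exact hf.tendsto_prod_nat
  have hfin : ∀ N, ∑ k ∈ range N, ccoef ρ ζ k N * (ζ k / (ζ k + z))
      = (∏ k ∈ range N, (1 + z / ρ k) / (1 + z / ζ k)) - ∏ k ∈ range N, ζ k / ρ k := by
    intro N
    have := finID hζpos hinter hinter' N z (fun j _ => hzne j)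
    linarith
  have hT : Tendsto (fun N => ∑ k ∈ range N, ccoef ρ ζ k N * (ζ k / (ζ k + z)))
      atTop (nhds ((∏' n, (1 + z / ρ n) / (1 + z / ζ n)) - a0)) := by
    have h := hPtend.sub ha0
    refine h.congr fun N => (hfin N).symm
  have hnn : ∀ k, 0 ≤ a k * (ζ k / (ζ k + z)) := fun k =>
    mul_nonneg (hapos k).le (hgpos k).le
  set L : ℝ := (∏' n, (1 + z / ρ n) / (1 + z / ζ n)) - a0 with hL
  have hbound : ∀ m, ∑ k ∈ range m, a k * (ζ k / (ζ k + z)) ≤ L := by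
    intro m
    have h1 : Tendsto (fun N => ∑ k ∈ range m, ccoef ρ ζ k N * (ζ k / (ζ k + z)))
        atTop (nhds (∑ k ∈ range m, a k * (ζ k / (ζ k + z)))) :=
      tendsto_finset_sum _ fun k _ => (hctend k).mul_const _
    refine le_of_tendsto_of_tendsto h1 hT (eventually_atTop.2 ⟨m, fun N hN => ?_⟩)
    exact Finset.sum_le_sum_of_subset_of_nonneg (Finset.range_subset_range.2 hN)
      fun k hk _ => mul_nonneg (ccoef_pos hζpos hinter hinter' k N).le (hgpos k).le
  have hsummable : Summable fun k => a k * (ζ k / (ζ k + z)) :=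
    summable_of_sum_range_le hnn hbound
  have h1 : ∑' k, a k * (ζ k / (ζ k + z)) ≤ L :=
    Summable.tsum_le_of_sum_range_le hsummable hbound
  have h2 : L ≤ ∑' k, a k * (ζ k / (ζ k + z)) := by
    refine le_of_tendsto hT (Eventually.of_forall fun N => ?_)
    refine le_trans (Finset.sum_le_sum fun k hk => ?_)
      (Summable.sum_le_tsum (range N) (fun k _ => hnn k) hsummable)
    exact mul_le_mul_of_nonneg_right (hcc_le_a k N (mem_range.mp hk)) (hgpos k).le
  rw [hL] at h1 h2
  linarith
end

section
/- With ρ, ζ interlacing positive increasing sequences as above and φ(z) = Π_{n≥1}(1 + z/ρ_n)/(1 + z/ζ_n), define b_0 = (1/ζ_1) lim_{n→∞} Π_{k=1}^n ρ_k/ζ_{k+1} and, for n ≥ 1, b_n = −(1 − ρ_n/ζ_n) Π_{k≠n} (1 − ρ_n/ζ_k)/(1 − ρ_n/ρ_k). Then b_0 ≥ 0, b_n > 0 for all n ≥ 1, and for all z > 0: 1/φ(z) = 1 + z·b_0 + Σ_{n≥1} b_n (1 − ρ_n/(ρ_n + z)). -/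
open Real Filter Finset Polynomial

lemma aux_hasProd_exp {ι : Type*} (f : ι → ℝ) (hf : ∀ i, 0 < f i) {S : ℝ}
    (h : HasSum (fun i => Real.log (f i)) S) : HasProd f (Real.exp S) := by
  have : Tendsto (fun s : Finset ι => Real.exp (∑ i ∈ s, Real.log (f i))) atTop
      (nhds (Real.exp S)) := (Real.continuous_exp.continuousAt.tendsto).comp h
  refine this.congr fun s => ?_
  rw [Real.exp_sum]
  exact Finset.prod_congr rfl fun i _ => Real.exp_log (hf i)

-- |log x| ≤ 2|x-1| for x ≥ 1/2
lemma aux_abs_log_le {x : ℝ} (hx : (1:ℝ)/2 ≤ x) : |Real.log x| ≤ 2 * |x - 1| := by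
  have hx0 : 0 < x := by linarith
  rcases le_or_gt 1 x with h1 | h1
  · rw [abs_of_nonneg (Real.log_nonneg h1), abs_of_nonneg (by linarith)]
    have := Real.log_le_sub_one_of_pos hx0
    linarith
  · rw [abs_of_nonpos (Real.log_nonpos (by linarith) h1.le), abs_of_neg (by linarith)]
    have h2 : Real.log x⁻¹ ≤ x⁻¹ - 1 := Real.log_le_sub_one_of_pos (by positivity)
    rw [Real.log_inv] at h2
    have h3 : x⁻¹ - 1 = (1 - x) / x := by field_simp
    have h4 : (1 - x) / x ≤ (1 - x) * 2 := by
      rw [div_le_iff₀ hx0]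
      nlinarith
    nlinarith


noncomputable def aN (ρ ζ : ℕ → ℝ) (n N : ℕ) : ℝ :=
  (∏ k ∈ range N, (1 - ρ n / ζ (k+1))) / (∏ k ∈ (range N).erase n, (1 - ρ n / ρ k))

section
variable (ρ ζ : ℕ → ℝ) (hζpos : ∀ n, 0 < ζ n)
    (hinter : ∀ n, ζ n < ρ n) (hinter' : ∀ n, ρ n < ζ (n + 1))

include hζpos hinter in
lemma hρpos : ∀ n, 0 < ρ n := fun n => (hζpos n).trans (hinter n)

include hζpos hinter hinter' in
lemma hρmono : StrictMono ρ :=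
  strictMono_nat_of_lt_succ fun n => (hinter' n).trans (hinter (n+1))

include hinter hinter' in
lemma hζmono : StrictMono ζ :=
  strictMono_nat_of_lt_succ fun n => (hinter n).trans (hinter' n)

-- ζ k ≠ ρ n always
include hζpos hinter hinter' in
lemma hζρne : ∀ k n, ζ k ≠ ρ n := by
  intro k n
  rcases le_or_gt k n with h | h
  · exact ne_of_lt (lt_of_le_of_lt ((hζmono ρ ζ hinter hinter').monotone h) (hinter n))
  · exact ne_of_gt (lt_of_lt_of_le (hinter' n) ((hζmono ρ ζ hinter hinter').monotone h))

include hζpos hinter hinter' in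
lemma hBne (n N : ℕ) : ∏ k ∈ (range N).erase n, (1 - ρ n / ρ k) ≠ 0 := by
  refine Finset.prod_ne_zero_iff.2 fun k hk => ?_
  have hkne : k ≠ n := (Finset.mem_erase.1 hk).1
  have : ρ k ≠ ρ n := fun h => hkne ((hρmono ρ ζ hζpos hinter hinter').injective h)
  have hρk : ρ k ≠ 0 := (hρpos ρ ζ hζpos hinter k).ne'
  intro h
  have h1 : ρ n / ρ k = 1 := by linarith
  exact this ((div_eq_one_iff_eq hρk).1 h1).symm

include hζpos hinter hinter' in
lemma eval_eq (n N : ℕ) (hn : n ∈ range N) :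
    (∏ k ∈ range N, ρ k) * ∏ k ∈ range N, (-ρ n + ζ (k+1))
      = aN ρ ζ n N * ρ n * (∏ k ∈ range N, ζ (k+1)) * ∏ k ∈ (range N).erase n, (-ρ n + ρ k) := by
  have hζ' : ∀ k : ℕ, ζ (k+1) ≠ 0 := fun k => (hζpos (k+1)).ne'
  have hρ0 : ∀ k : ℕ, ρ k ≠ 0 := fun k => (hρpos ρ ζ hζpos hinter k).ne'
  have hA : (∏ k ∈ range N, (1 - ρ n / ζ (k+1)))
      = (∏ k ∈ range N, (ζ (k+1) - ρ n)) / (∏ k ∈ range N, ζ (k+1)) := by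
    rw [← Finset.prod_div_distrib]
    exact Finset.prod_congr rfl fun k _ => by rw [sub_div, div_self (hζ' k)]
  have hB : (∏ k ∈ (range N).erase n, (1 - ρ n / ρ k))
      = (∏ k ∈ (range N).erase n, (ρ k - ρ n)) / (∏ k ∈ (range N).erase n, ρ k) := by
    rw [← Finset.prod_div_distrib]
    exact Finset.prod_congr rfl fun k _ => by rw [sub_div, div_self (hρ0 k)]
  have hBne' : (∏ k ∈ (range N).erase n, (ρ k - ρ n)) ≠ 0 := by
    refine Finset.prod_ne_zero_iff.2 fun k hk => sub_ne_zero.2 ?_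
    exact fun h => (Finset.mem_erase.1 hk).1 ((hρmono ρ ζ hζpos hinter hinter').injective h)
  have hζprodne : (∏ k ∈ range N, ζ (k+1)) ≠ 0 := Finset.prod_ne_zero_iff.2 fun k _ => hζ' k
  have hρprodne : (∏ k ∈ (range N).erase n, ρ k) ≠ 0 := Finset.prod_ne_zero_iff.2 fun k _ => hρ0 k
  have hprodρ : ρ n * ∏ k ∈ (range N).erase n, ρ k = ∏ k ∈ range N, ρ k :=
    Finset.mul_prod_erase (range N) ρ hn
  have h1 : ∀ k, -ρ n + ζ (k+1) = ζ (k+1) - ρ n := fun k => by ring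
  have h2 : ∀ k, -ρ n + ρ k = ρ k - ρ n := fun k => by ring
  simp only [h1, h2]
  rw [aN, hA, hB]
  field_simp
  ring_nf
  rw [← hprodρ]
  ring

include hζpos hinter hinter' in
lemma polyPF (N : ℕ) :
    (C (∏ k ∈ range N, ρ k) * ∏ k ∈ range N, (X + C (ζ (k+1))) : ℝ[X])
      = C (∏ k ∈ range N, ρ k) * ∏ k ∈ range N, (X + C (ρ k))
        + ∑ n ∈ range N, C (aN ρ ζ n N * ρ n * ∏ k ∈ range N, ζ (k+1))
            * ∏ k ∈ (range N).erase n, (X + C (ρ k)) := by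
  classical
  rcases Nat.eq_zero_or_pos N with rfl | hN
  · simp
  set P : ℝ[X] := C (∏ k ∈ range N, ρ k) * ∏ k ∈ range N, (X + C (ζ (k+1))) with hP
  set Q : ℝ[X] := C (∏ k ∈ range N, ρ k) * ∏ k ∈ range N, (X + C (ρ k))
        + ∑ n ∈ range N, C (aN ρ ζ n N * ρ n * ∏ k ∈ range N, ζ (k+1))
            * ∏ k ∈ (range N).erase n, (X + C (ρ k)) with hQ
  have hmonic1 : (∏ k ∈ range N, (X + C (ζ (k+1))) : ℝ[X]).Monic :=
    monic_prod_of_monic _ _ fun k _ => monic_X_add_C _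
  have hmonic2 : (∏ k ∈ range N, (X + C (ρ k)) : ℝ[X]).Monic :=
    monic_prod_of_monic _ _ fun k _ => monic_X_add_C _
  have hmonicE : ∀ n, (∏ k ∈ (range N).erase n, (X + C (ρ k)) : ℝ[X]).Monic :=
    fun n => monic_prod_of_monic _ _ fun k _ => monic_X_add_C _
  have hdeg1 : (∏ k ∈ range N, (X + C (ζ (k+1))) : ℝ[X]).natDegree = N := by
    rw [natDegree_prod_of_monic _ _ fun k _ => monic_X_add_C _]
    simp [natDegree_X_add_C]
  have hdeg2 : (∏ k ∈ range N, (X + C (ρ k)) : ℝ[X]).natDegree = N := by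
    rw [natDegree_prod_of_monic _ _ fun k _ => monic_X_add_C _]
    simp [natDegree_X_add_C]
  have hdegE : ∀ n ∈ range N, (∏ k ∈ (range N).erase n, (X + C (ρ k)) : ℝ[X]).natDegree = N - 1 := by
    intro n hn
    rw [natDegree_prod_of_monic _ _ fun k _ => monic_X_add_C _]
    simp only [natDegree_X_add_C]
    rw [Finset.sum_const, smul_eq_mul, mul_one, Finset.card_erase_of_mem hn, Finset.card_range]
  have hdegP : P.natDegree ≤ N := le_trans (natDegree_C_mul_le _ _) (le_of_eq hdeg1)
  have hdegQ : Q.natDegree ≤ N := by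
    refine le_trans (natDegree_add_le _ _) (max_le (le_trans (natDegree_C_mul_le _ _) (le_of_eq hdeg2)) ?_)
    refine le_trans (natDegree_sum_le _ _) ?_
    simp only [Finset.fold_max_le]
    refine ⟨Nat.zero_le _, fun n hn => ?_⟩
    exact le_trans (natDegree_C_mul_le _ _) (le_trans (le_of_eq (hdegE n hn)) (Nat.sub_le _ _))
  have hc1 := hmonic1.coeff_natDegree
  rw [hdeg1] at hc1
  have hc2 := hmonic2.coeff_natDegree
  rw [hdeg2] at hc2
  have hcoeffP : P.coeff N = ∏ k ∈ range N, ρ k := by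
    rw [hP, coeff_C_mul, hc1, mul_one]
  have hQc : ∀ n ∈ range N, (C (aN ρ ζ n N * ρ n * ∏ k ∈ range N, ζ (k+1))
      * ∏ k ∈ (range N).erase n, (X + C (ρ k)) : ℝ[X]).coeff N = 0 := by
    intro n hn
    refine coeff_eq_zero_of_natDegree_lt (lt_of_le_of_lt (natDegree_C_mul_le _ _) ?_)
    rw [hdegE n hn]
    omega
  have hcoeffQ : Q.coeff N = ∏ k ∈ range N, ρ k := by
    rw [hQ, coeff_add, coeff_C_mul, hc2, mul_one, finset_sum_coeff,
      Finset.sum_eq_zero hQc, add_zero]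
  have heval : ∀ n ∈ range N, (P - Q).eval (-ρ n) = 0 := by
    intro n hn
    have hPe : P.eval (-ρ n) = (∏ k ∈ range N, ρ k) * ∏ k ∈ range N, (-ρ n + ζ (k+1)) := by
      simp [hP, eval_prod]
    have hQe : Q.eval (-ρ n)
        = aN ρ ζ n N * ρ n * (∏ k ∈ range N, ζ (k+1)) * ∏ k ∈ (range N).erase n, (-ρ n + ρ k) := by
      simp only [hQ, eval_add, eval_mul, eval_C, eval_prod, eval_finset_sum, eval_X]
      have hz1 : (∏ k ∈ range N, (-ρ n + ρ k)) = 0 :=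
        Finset.prod_eq_zero hn (by ring)
      rw [hz1, mul_zero, zero_add]
      rw [Finset.sum_eq_single_of_mem n hn]
      intro m hm hmn
      have : (∏ k ∈ (range N).erase m, (-ρ n + ρ k)) = 0 :=
        Finset.prod_eq_zero (Finset.mem_erase.2 ⟨hmn.symm, hn⟩) (by ring)
      rw [this, mul_zero]
    rw [eval_sub, hPe, hQe, eval_eq ρ ζ hζpos hinter hinter' n N hn, sub_self]
  -- conclude P = Q
  have hsub : P - Q = 0 := by
    by_cases hD : P - Q = 0
    · exact hD
    · have hne : (P - Q).natDegree < N := by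
        rcases lt_or_eq_of_le (le_trans (natDegree_sub_le _ _) (max_le hdegP hdegQ)) with h | h
        · exact h
        · exfalso
          apply hD
          have : (P - Q).coeff (P - Q).natDegree = 0 := by
            rw [h, coeff_sub, hcoeffP, hcoeffQ, sub_self]
          exact leadingCoeff_eq_zero.1 this
      have hinj : Function.Injective (fun n : Fin N => -ρ n) := by
        intro i j hij
        have := neg_injective hij
        exact Fin.ext ((hρmono ρ ζ hζpos hinter hinter').injective this)
      exact eq_zero_of_natDegree_lt_card_of_eval_eq_zero (P - Q) hinj
        (fun i => heval i (Finset.mem_range.2 i.2)) (by rwa [Fintype.card_fin])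
  exact sub_eq_zero.1 hsub

include hζpos hinter hinter' in
lemma finPF (N : ℕ) (z : ℝ) (hz : 0 ≤ z) :
    ∏ k ∈ range N, ((1 + z / ζ (k+1)) / (1 + z / ρ k))
      = (∏ k ∈ range N, ρ k / ζ (k+1))
        + ∑ n ∈ range N, aN ρ ζ n N * (ρ n / (ρ n + z)) := by
  have hρp : ∀ k : ℕ, 0 < ρ k := hρpos ρ ζ hζpos hinter
  have hzρ : ∀ k : ℕ, 0 < z + ρ k := fun k => by linarith [hρp k]
  have hzζ : ∀ k : ℕ, 0 < z + ζ (k+1) := fun k => by linarith [hζpos (k+1)]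
  have key := congrArg (eval z) (polyPF ρ ζ hζpos hinter hinter' N)
  simp only [eval_add, eval_mul, eval_C, eval_prod, eval_finset_sum, eval_X] at key
  have hfac : ∀ k ∈ range N, (1 + z / ζ (k+1)) / (1 + z / ρ k)
      = (ρ k * (z + ζ (k+1))) / (ζ (k+1) * (z + ρ k)) := by
    intro k _
    have h1 : 0 < 1 + z / ρ k := by
      have := hρp k; positivity
    have hζne := (hζpos (k+1)).ne'
    have hρne := (hρp k).ne'
    rw [div_eq_div_iff h1.ne' (mul_pos (hζpos (k+1)) (hzρ k)).ne']
    field_simp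
    ring
  have hLHS : ∏ k ∈ range N, ((1 + z / ζ (k+1)) / (1 + z / ρ k))
      = ((∏ k ∈ range N, ρ k) * ∏ k ∈ range N, (z + ζ (k+1)))
        / ((∏ k ∈ range N, ζ (k+1)) * ∏ k ∈ range N, (z + ρ k)) := by
    rw [Finset.prod_congr rfl hfac, Finset.prod_div_distrib, Finset.prod_mul_distrib,
      Finset.prod_mul_distrib]
  have hne : ((∏ k ∈ range N, ζ (k+1)) * ∏ k ∈ range N, (z + ρ k)) ≠ 0 := by
    refine mul_ne_zero ?_ ?_ <;> refine Finset.prod_ne_zero_iff.2 fun k _ => ?_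
    · exact (hζpos (k+1)).ne'
    · exact (hzρ k).ne'
  rw [hLHS, div_eq_iff hne, key, add_mul, Finset.sum_mul]
  congr 1
  · rw [Finset.prod_div_distrib]
    have hζprodne : (∏ k ∈ range N, ζ (k+1)) ≠ 0 :=
      Finset.prod_ne_zero_iff.2 fun k _ => (hζpos (k+1)).ne'
    field_simp
  · refine Finset.sum_congr rfl fun n hn => ?_
    rw [← Finset.mul_prod_erase (range N) (fun k => z + ρ k) hn]
    have h2 : (ρ n + z) ≠ 0 := by have := hzρ n; intro h; linarith
    field_simp
    ring

include hζpos hinter hinter' in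
lemma aN_split (n N : ℕ) (hn : n < N) :
    aN ρ ζ n N = (1 - ρ n / ζ (n+1)) *
      ∏ k ∈ (range N).erase n, ((1 - ρ n / ζ (k+1)) / (1 - ρ n / ρ k)) := by
  rw [aN, ← Finset.mul_prod_erase (range N) (fun k => (1 - ρ n / ζ (k+1)))
    (Finset.mem_range.2 hn), Finset.prod_div_distrib, mul_div_assoc]

-- factors in the split are positive
include hζpos hinter hinter' in
lemma cpos (n k : ℕ) (hk : k ≠ n) : 0 < (1 - ρ n / ζ (k+1)) / (1 - ρ n / ρ k) := by
  have hρp := hρpos ρ ζ hζpos hinter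
  have hρm := hρmono ρ ζ hζpos hinter hinter'
  have hζm := hζmono ρ ζ hinter hinter'
  rcases lt_or_gt_of_ne hk with h | h
  · -- k < n : both factors negative
    have h1 : ρ n / ζ (k+1) > 1 := by
      rw [gt_iff_lt, lt_div_iff₀ (hζpos (k+1))]
      have : ζ (k+1) ≤ ζ n := hζm.monotone (by omega)
      linarith [hinter n]
    have h2 : ρ n / ρ k > 1 := by
      rw [gt_iff_lt, lt_div_iff₀ (hρp k)]
      have : ρ k < ρ n := hρm h
      linarith
    exact div_pos_of_neg_of_neg (by linarith) (by linarith)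
  · -- k > n : both positive
    have h1 : ρ n / ζ (k+1) < 1 := by
      rw [div_lt_one (hζpos (k+1))]
      calc ρ n < ζ (n+1) := hinter' n
        _ ≤ ζ (k+1) := hζm.monotone (by omega)
    have h2 : ρ n / ρ k < 1 := by
      rw [div_lt_one (hρp k)]
      exact hρm h
    exact div_pos (by linarith) (by linarith)

include hζpos hinter hinter' in
lemma aN_pos (n N : ℕ) (hn : n < N) : 0 < aN ρ ζ n N := by
  rw [aN_split ρ ζ hζpos hinter hinter' n N hn]
  have h0 : 0 < 1 - ρ n / ζ (n+1) := by
    have := hinter' n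
    have := hζpos (n+1)
    have : ρ n / ζ (n+1) < 1 := by rw [div_lt_one (hζpos (n+1))]; exact hinter' n
    linarith
  exact mul_pos h0 (Finset.prod_pos fun k hk => cpos ρ ζ hζpos hinter hinter' n k (Finset.mem_erase.1 hk).1)

include hζpos hinter hinter' in
lemma erase_succ (n N : ℕ) (hn : n < N) (f : ℕ → ℝ) :
    ∏ k ∈ (range (N+1)).erase n, f k = (∏ k ∈ (range N).erase n, f k) * f N := by
  have hset : (range (N+1)).erase n = insert N ((range N).erase n) := by
    ext m
    simp only [Finset.mem_erase, Finset.mem_range, Finset.mem_insert]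
    omega
  rw [hset, Finset.prod_insert (by simp [Finset.mem_erase]), mul_comm]

include hζpos hinter hinter' in
lemma aN_mono (n N : ℕ) (hn : n < N) : aN ρ ζ n N ≤ aN ρ ζ n (N+1) := by
  rw [aN_split ρ ζ hζpos hinter hinter' n N hn,
    aN_split ρ ζ hζpos hinter hinter' n (N+1) (by omega),
    erase_succ ρ ζ hζpos hinter hinter' n N hn]
  rw [← mul_assoc]
  have hprodpos : 0 < (1 - ρ n / ζ (n+1)) * ∏ k ∈ (range N).erase n, ((1 - ρ n / ζ (k+1)) / (1 - ρ n / ρ k)) := by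
    have h0 : 0 < 1 - ρ n / ζ (n+1) := by
      have : ρ n / ζ (n+1) < 1 := by rw [div_lt_one (hζpos (n+1))]; exact hinter' n
      linarith
    exact mul_pos h0 (Finset.prod_pos fun k hk => cpos ρ ζ hζpos hinter hinter' n k (Finset.mem_erase.1 hk).1)
  nth_rewrite 1 [← mul_one ((1 - ρ n / ζ (n+1)) * ∏ k ∈ (range N).erase n, ((1 - ρ n / ζ (k+1)) / (1 - ρ n / ρ k)))]
  refine mul_le_mul_of_nonneg_left ?_ hprodpos.le
  -- 1 ≤ (1 - ρ n / ζ (N+1)) / (1 - ρ n / ρ N)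
  have hρm := hρmono ρ ζ hζpos hinter hinter'
  have hd : 0 < 1 - ρ n / ρ N := by
    have : ρ n / ρ N < 1 := by
      rw [div_lt_one (hρpos ρ ζ hζpos hinter N)]
      exact hρm hn
    linarith
  rw [le_div_iff₀ hd, one_mul, sub_le_sub_iff_left]
  exact div_le_div_of_nonneg_left (hρpos ρ ζ hζpos hinter n).le
    (hρpos ρ ζ hζpos hinter N) (hinter' N).le

omit hζpos hinter hinter' in
lemma aux_summable_log {f g : ℕ → ℝ} (hg : Summable g)
    (hfg : ∀ᶠ k in atTop, |f k - 1| ≤ g k) : Summable fun k => Real.log (f k) := by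
  have hg0 : Tendsto g atTop (nhds 0) := hg.tendsto_atTop_zero
  have hev : ∀ᶠ k in atTop, ‖Real.log (f k)‖ ≤ 2 * g k := by
    filter_upwards [hfg, hg0.eventually (gt_mem_nhds (by norm_num : (0:ℝ) < 1/2))] with k h1 h2
    have hf2 : (1:ℝ)/2 ≤ f k := by
      have := abs_le.1 (h1.trans h2.le)
      linarith [this.1]
    calc ‖Real.log (f k)‖ = |Real.log (f k)| := rfl
      _ ≤ 2 * |f k - 1| := aux_abs_log_le hf2
      _ ≤ 2 * g k := by linarith [h1]
  exact Summable.of_norm_bounded_eventually (hg.mul_left 2)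
    (by rwa [Nat.cofinite_eq_atTop])

omit hζpos hinter hinter' in
lemma aux_prod_indicator (c : ℕ → ℝ) (n N : ℕ) :
    ∏ k ∈ range N, Set.mulIndicator {k | k ≠ n} c k = ∏ k ∈ (range N).erase n, c k := by
  by_cases h : n < N
  · rw [← Finset.mul_prod_erase (range N) _ (Finset.mem_range.2 h),
      Set.mulIndicator_of_notMem (by simp) c, one_mul]
    exact Finset.prod_congr rfl fun k hk =>
      Set.mulIndicator_of_mem (show k ∈ {k | k ≠ n} from (Finset.mem_erase.1 hk).1) c
  · rw [Finset.erase_eq_of_notMem (fun hc => h (Finset.mem_range.1 hc))]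
    exact Finset.prod_congr rfl fun k hk =>
      Set.mulIndicator_of_mem
        (show k ∈ {k | k ≠ n} from by simp only [Set.mem_setOf_eq]; have := Finset.mem_range.1 hk; omega) c

include hζpos hinter hinter' in
lemma sumT : Summable (fun k => 1 / ζ k - 1 / ζ (k+1)) := by
  have hnn : ∀ k, 0 ≤ 1 / ζ k - 1 / ζ (k+1) := by
    intro k
    have h1 : 1 / ζ (k+1) ≤ 1 / ζ k :=
      one_div_le_one_div_of_le (hζpos k) ((hζmono ρ ζ hinter hinter').monotone (by omega))
    linarith
  refine summable_of_sum_range_le hnn (c := 1 / ζ 0) fun N => ?_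
  rw [Finset.sum_range_sub' (fun k => 1 / ζ k) N]
  have h0 : 0 < ζ N := hζpos N
  have h1 : 0 ≤ 1 / ζ N := by positivity
  linarith

include hζpos hinter hinter' in
lemma cpos' (n k : ℕ) (hk : k ≠ n) : 0 < (1 - ρ n / ζ k) / (1 - ρ n / ρ k) := by
  have hρp := hρpos ρ ζ hζpos hinter
  have hρm := hρmono ρ ζ hζpos hinter hinter'
  have hζm := hζmono ρ ζ hinter hinter'
  rcases lt_or_gt_of_ne hk with h | h
  · have h1 : ρ n / ζ k > 1 := by
      rw [gt_iff_lt, lt_div_iff₀ (hζpos k)]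
      have : ζ k ≤ ζ n := hζm.monotone (by omega)
      linarith [hinter n]
    have h2 : ρ n / ρ k > 1 := by
      rw [gt_iff_lt, lt_div_iff₀ (hρp k)]
      have : ρ k < ρ n := hρm h
      linarith
    exact div_pos_of_neg_of_neg (by linarith) (by linarith)
  · have h1 : ρ n / ζ k < 1 := by
      rw [div_lt_one (hζpos k)]
      calc ρ n < ζ (n+1) := hinter' n
        _ ≤ ζ k := hζm.monotone (by omega)
    have h2 : ρ n / ρ k < 1 := by
      rw [div_lt_one (hρp k)]
      exact hρm h
    exact div_pos (by linarith) (by linarith)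

include hζpos hinter hinter' in
lemma c_bound (n k : ℕ) (hk2 : 2 * ρ n ≤ ρ k) (hkn : n < k) :
    |(1 - ρ n / ζ k) / (1 - ρ n / ρ k) - 1| ≤ (2 * ρ n) * (1 / ζ k - 1 / ζ (k+1)) := by
  have hρp := hρpos ρ ζ hζpos hinter
  have hρnpos := hρp n
  have hρkpos := hρp k
  have hζkpos := hζpos k
  have hd : ρ n / ρ k ≤ 1/2 := by
    rw [div_le_iff₀ hρkpos]; linarith
  have hdpos : 0 < 1 - ρ n / ρ k := by linarith
  have hdne : (1 - ρ n / ρ k) ≠ 0 := hdpos.ne'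
  have he : (1 - ρ n / ζ k) / (1 - ρ n / ρ k) - 1
      = (ρ n / ρ k - ρ n / ζ k) / (1 - ρ n / ρ k) := by
    have h := sub_div (1 - ρ n / ζ k) (1 - ρ n / ρ k) (1 - ρ n / ρ k)
    rw [div_self hdne] at h
    rw [← h]
    congr 1
    ring
  have hζρ : ζ k < ρ k := hinter k
  have hnum : ρ n / ρ k ≤ ρ n / ζ k :=
    div_le_div_of_nonneg_left hρnpos.le hζkpos hζρ.le
  rw [he, abs_div, abs_of_nonpos (by linarith), abs_of_pos hdpos, neg_sub]
  have h3 : (ρ n / ζ k - ρ n / ρ k) / (1 - ρ n / ρ k) ≤ (ρ n / ζ k - ρ n / ρ k) / (1/2) := by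
    apply div_le_div_of_nonneg_left (by linarith) (by norm_num) (by linarith)
  have h4 : 1 / ζ (k+1) ≤ 1 / ρ k :=
    one_div_le_one_div_of_le hρkpos (hinter' k).le
  have h5 : ρ n * (1 / ζ (k+1)) ≤ ρ n * (1 / ρ k) :=
    mul_le_mul_of_nonneg_left h4 hρnpos.le
  have hx : ρ n / ζ k = ρ n * (1 / ζ k) := by ring
  have hy : ρ n / ρ k = ρ n * (1 / ρ k) := by ring
  calc (ρ n / ζ k - ρ n / ρ k) / (1 - ρ n / ρ k)
      ≤ (ρ n / ζ k - ρ n / ρ k) / (1/2) := h3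
    _ = 2 * (ρ n * (1 / ζ k) - ρ n * (1 / ρ k)) := by rw [hx, hy]; ring
    _ ≤ (2 * ρ n) * (1 / ζ k - 1 / ζ (k+1)) := by nlinarith [h5]

include hζpos hinter hinter' in
lemma c_conv (hρtop : Tendsto ρ atTop atTop) (n : ℕ) :
    0 < (∏' k : {k : ℕ // k ≠ n}, (1 - ρ n / ζ (k : ℕ)) / (1 - ρ n / ρ (k : ℕ))) ∧
    Tendsto (fun N => ∏ k ∈ (range N).erase n, ((1 - ρ n / ζ k) / (1 - ρ n / ρ k))) atTop
      (nhds (∏' k : {k : ℕ // k ≠ n}, (1 - ρ n / ζ (k : ℕ)) / (1 - ρ n / ρ (k : ℕ)))) := by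
  set c : ℕ → ℝ := fun k => (1 - ρ n / ζ k) / (1 - ρ n / ρ k) with hc
  set F : ℕ → ℝ := Set.mulIndicator {k | k ≠ n} c with hF
  have hFpos : ∀ k, 0 < F k := by
    intro k
    by_cases hk : k = n
    · rw [hF, Set.mulIndicator_of_notMem (by simp [hk])]
      norm_num
    · rw [hF, Set.mulIndicator_of_mem (show k ∈ {k | k ≠ n} from hk)]
      exact cpos' ρ ζ hζpos hinter hinter' n k hk
  have hbound : ∀ᶠ k in atTop, |F k - 1| ≤ (2 * ρ n) * (1 / ζ k - 1 / ζ (k+1)) := by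
    filter_upwards [hρtop.eventually_ge_atTop (2 * ρ n), eventually_gt_atTop n] with k h1 h2
    rw [hF, Set.mulIndicator_of_mem (show k ∈ {k | k ≠ n} by simp only [Set.mem_setOf_eq]; omega)]
    exact c_bound ρ ζ hζpos hinter hinter' n k h1 h2
  have hlog : Summable fun k => Real.log (F k) :=
    aux_summable_log ((sumT ρ ζ hζpos hinter hinter').mul_left (2 * ρ n)) hbound
  have hProd : HasProd F (Real.exp (∑' k, Real.log (F k))) :=
    aux_hasProd_exp F hFpos hlog.hasSum
  have htp : (∏' k : {k : ℕ // k ≠ n}, c k) = ∏' k, F k := tprod_subtype {k | k ≠ n} c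
  have htpF : (∏' k, F k) = Real.exp (∑' k, Real.log (F k)) := hProd.tprod_eq
  constructor
  · rw [htp, htpF]; exact Real.exp_pos _
  · have := hProd.tendsto_prod_nat
    rw [htp, htpF]
    refine this.congr fun N => ?_
    exact aux_prod_indicator c n N

end

set_option maxHeartbeats 2000000 in
/-- Partial fraction decomposition of the reciprocal interlacing infinite product:
`1/φ(z) = 1 + z b₀ + Σₙ bₙ (1 - ρₙ/(ρₙ + z))` for `z > 0`, with `b₀ ≥ 0` and `bₙ > 0`. -/
theorem interlacing_product_reciprocal_partial_fractions
    (ρ ζ : ℕ → ℝ) (b0 : ℝ) (b : ℕ → ℝ)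
    (hζpos : ∀ n, 0 < ζ n)
    (hinter : ∀ n, ζ n < ρ n) (hinter' : ∀ n, ρ n < ζ (n + 1))
    (hρtop : Tendsto ρ atTop atTop)
    (hb0 : Tendsto (fun n => (1 / ζ 0) * ∏ k ∈ range n, ρ k / ζ (k + 1)) atTop (nhds b0))
    (hb : ∀ n, b n = -(1 - ρ n / ζ n) *
      ∏' k : {k : ℕ // k ≠ n}, (1 - ρ n / ζ (k : ℕ)) / (1 - ρ n / ρ (k : ℕ))) :
    0 ≤ b0 ∧ (∀ n, 0 < b n) ∧
      ∀ z : ℝ, 0 < z →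
        1 / (∏' n, (1 + z / ρ n) / (1 + z / ζ n)) =
          1 + z * b0 + ∑' n, b n * (1 - ρ n / (ρ n + z)) := by
  have hρp := hρpos ρ ζ hζpos hinter
  have hρm := hρmono ρ ζ hζpos hinter hinter'
  have hζm := hζmono ρ ζ hinter hinter'
  have hζ0 := hζpos 0
  have hζtop : Tendsto ζ atTop atTop := by
    have h1 : Tendsto (fun n => ζ (n + 1)) atTop atTop :=
      tendsto_atTop_mono (fun n => (hinter' n).le) hρtop
    exact (tendsto_add_atTop_iff_nat 1).1 h1
  set A0 : ℕ → ℝ := fun N => ∏ k ∈ range N, ρ k / ζ (k+1) with hA0def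
  have hA0pos : ∀ N, 0 < A0 N := fun N =>
    Finset.prod_pos fun k _ => div_pos (hρp k) (hζpos (k+1))
  set L : ℝ := ζ 0 * b0 with hLdef
  have hA0L : Tendsto A0 atTop (nhds L) := by
    have h := hb0.const_mul (ζ 0)
    exact h.congr fun N => by
      rw [← mul_assoc, mul_one_div, div_self hζ0.ne', one_mul]
  have hb0nn : 0 ≤ b0 := by
    refine ge_of_tendsto hb0 (Eventually.of_forall fun N => ?_)
    have := hA0pos N
    positivity
  have hA0anti : Antitone A0 := by
    refine antitone_nat_of_succ_le fun N => ?_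
    rw [hA0def]
    simp only [Finset.prod_range_succ]
    have hfac : ρ N / ζ (N+1) ≤ 1 := by
      rw [div_le_one (hζpos (N+1))]
      exact (hinter' N).le
    nth_rewrite 2 [← mul_one (∏ k ∈ range N, ρ k / ζ (k+1))]
    exact mul_le_mul_of_nonneg_left hfac (hA0pos N).le
  have hLle : ∀ N, L ≤ A0 N := fun N => hA0anti.le_of_tendsto hA0L N
  have hLnn : 0 ≤ L := by rw [hLdef]; positivity
  -- mass identity
  have hmass : ∀ N, A0 N + ∑ n ∈ range N, aN ρ ζ n N = 1 := by
    intro N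
    have h := finPF ρ ζ hζpos hinter hinter' N 0 le_rfl
    simp only [zero_div, add_zero, div_one, one_div_one, Finset.prod_const_one] at h
    rw [Finset.sum_congr rfl (fun n _ => by rw [div_self (hρp n).ne', mul_one])] at h
    exact h.symm
  -- the limit coefficients
  set a : ℕ → ℝ := fun n => b n / (ρ n / ζ 0 - 1) with hadef
  have hρζ0 : ∀ n, 0 < ρ n / ζ 0 - 1 := by
    intro n
    have h1 : ζ 0 ≤ ζ n := hζm.monotone (Nat.zero_le n)
    have h2 : 1 < ρ n / ζ 0 := (one_lt_div hζ0).2 (lt_of_le_of_lt h1 (hinter n))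
    linarith
  have hbpos : ∀ n, 0 < b n := by
    intro n
    rw [hb n]
    have h1 : 0 < -(1 - ρ n / ζ n) := by
      have : 1 < ρ n / ζ n := (one_lt_div (hζpos n)).2 (hinter n)
      linarith
    exact mul_pos h1 (c_conv ρ ζ hζpos hinter hinter' hρtop n).1
  have hapos : ∀ n, 0 < a n := fun n => div_pos (hbpos n) (hρζ0 n)
  have haN_lim : ∀ n, Tendsto (fun N => aN ρ ζ n N) atTop (nhds (a n)) := by
    intro n
    obtain ⟨hPpos, hP⟩ := c_conv ρ ζ hζpos hinter hinter' hρtop n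
    have hu0 : 1 - ρ n / ζ 0 < 0 := by
      have := hρζ0 n; linarith
    have hu0ne : (1 - ρ n / ζ 0) ≠ 0 := hu0.ne
    have heq : ∀ᶠ N in atTop, ((1 - ρ n / ζ n) * (1 - ρ n / ζ N) / (1 - ρ n / ζ 0)) *
        (∏ k ∈ (range N).erase n, ((1 - ρ n / ζ k) / (1 - ρ n / ρ k))) = aN ρ ζ n N := by
      filter_upwards [eventually_gt_atTop n] with N hN
      rw [aN]
      have h1 : ∏ k ∈ range N, (1 - ρ n / ζ (k+1))
          = (∏ j ∈ range (N+1), (1 - ρ n / ζ j)) / (1 - ρ n / ζ 0) := by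
        rw [Finset.prod_range_succ' (fun j => 1 - ρ n / ζ j) N,
          mul_div_cancel_right₀ _ hu0ne]
      have h2 : ∏ j ∈ range (N+1), (1 - ρ n / ζ j)
          = (1 - ρ n / ζ n) * ((∏ k ∈ (range N).erase n, (1 - ρ n / ζ k)) * (1 - ρ n / ζ N)) := by
        have e1 : ∏ j ∈ range (N+1), (1 - ρ n / ζ j)
            = (1 - ρ n / ζ n) * ∏ j ∈ (range (N+1)).erase n, (1 - ρ n / ζ j) :=
          (Finset.mul_prod_erase (range (N+1)) (fun j => 1 - ρ n / ζ j)
            (Finset.mem_range.2 (Nat.lt_succ_of_lt hN))).symm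
        rw [e1, erase_succ ρ ζ hζpos hinter hinter' n N hN (fun j => 1 - ρ n / ζ j)]
      rw [h1, h2, Finset.prod_div_distrib]
      have hD := hBne ρ ζ hζpos hinter hinter' n N
      field_simp
    have hζN1 : Tendsto (fun N => 1 - ρ n / ζ N) atTop (nhds 1) := by
      have h := (tendsto_const_nhds (x := ρ n)).div_atTop hζtop
      have h2 := (tendsto_const_nhds (x := (1:ℝ))).sub h
      simpa using h2
    have hlim : Tendsto (fun N => ((1 - ρ n / ζ n) * (1 - ρ n / ζ N) / (1 - ρ n / ζ 0)) *
        (∏ k ∈ (range N).erase n, ((1 - ρ n / ζ k) / (1 - ρ n / ρ k)))) atTop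
        (nhds (((1 - ρ n / ζ n) * 1 / (1 - ρ n / ζ 0)) *
          (∏' k : {k : ℕ // k ≠ n}, (1 - ρ n / ζ (k : ℕ)) / (1 - ρ n / ρ (k : ℕ))))) := by
      exact (((tendsto_const_nhds.mul hζN1).div_const _).mul hP)
    have hval : ((1 - ρ n / ζ n) * 1 / (1 - ρ n / ζ 0)) *
        (∏' k : {k : ℕ // k ≠ n}, (1 - ρ n / ζ (k : ℕ)) / (1 - ρ n / ρ (k : ℕ))) = a n := by
      simp only [hadef]
      rw [hb n]
      set P := ∏' k : {k : ℕ // k ≠ n}, (1 - ρ n / ζ (k : ℕ)) / (1 - ρ n / ρ (k : ℕ)) with hPdef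
      rw [eq_div_iff (hρζ0 n).ne', show ρ n / ζ 0 - 1 = -(1 - ρ n / ζ 0) by ring]
      field_simp
      have h1 : ζ 0 - ρ n ≠ 0 := by
        have h3 : ζ 0 ≤ ζ n := hζm.monotone (Nat.zero_le n)
        have h4 := hinter n
        intro hcon
        have : ζ 0 = ρ n := by linarith
        linarith
      have h2 : ζ n ≠ 0 := (hζpos n).ne'
      field_simp
    rw [hval] at hlim
    exact hlim.congr' heq
  -- aN n N ≤ a n
  have haN_mono : ∀ n N M, n < N → N ≤ M → aN ρ ζ n N ≤ aN ρ ζ n M := by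
    intro n N M hnN hNM
    induction M, hNM using Nat.le_induction with
    | base => exact le_rfl
    | succ M hM ih =>
        exact le_trans ih (aN_mono ρ ζ hζpos hinter hinter' n M (by omega))
  have haN_le : ∀ n N, n < N → aN ρ ζ n N ≤ a n := by
    intro n N hnN
    refine ge_of_tendsto (haN_lim n) ?_
    filter_upwards [eventually_ge_atTop N] with M hM
    exact haN_mono n N M hnN hM
  -- summability of a
  have hsum_range : ∀ M, ∑ n ∈ range M, a n ≤ 1 - L := by
    intro M
    have h1 : Tendsto (fun N => ∑ n ∈ range M, aN ρ ζ n N) atTop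
        (nhds (∑ n ∈ range M, a n)) := tendsto_finset_sum _ fun n _ => haN_lim n
    have h2 : Tendsto (fun N => 1 - A0 N) atTop (nhds (1 - L)) :=
      tendsto_const_nhds.sub hA0L
    refine le_of_tendsto_of_tendsto h1 h2 ?_
    filter_upwards [eventually_ge_atTop M] with N hN
    have h3 : ∑ n ∈ range M, aN ρ ζ n N ≤ ∑ n ∈ range N, aN ρ ζ n N := by
      refine Finset.sum_le_sum_of_subset_of_nonneg (Finset.range_subset_range.2 hN) ?_
      intro n hn _
      exact (aN_pos ρ ζ hζpos hinter hinter' n N (Finset.mem_range.1 hn)).le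
    have h4 := hmass N
    linarith
  have hsummable_a : Summable a :=
    summable_of_sum_range_le (fun n => (hapos n).le) hsum_range
  have htsum_a : ∑' n, a n = 1 - L := by
    refine le_antisymm (Real.tsum_le_of_sum_range_le (fun n => (hapos n).le) hsum_range) ?_
    have h1 : Tendsto (fun N => 1 - A0 N) atTop (nhds (1 - L)) := tendsto_const_nhds.sub hA0L
    refine le_of_tendsto h1 (Eventually.of_forall fun N => ?_)
    have h2 : ∑ n ∈ range N, aN ρ ζ n N ≤ ∑ n ∈ range N, a n :=
      Finset.sum_le_sum fun n hn => haN_le n N (Finset.mem_range.1 hn)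
    have h3 : ∑ n ∈ range N, a n ≤ ∑' n, a n :=
      Summable.sum_le_tsum _ (fun n _ => (hapos n).le) hsummable_a
    have h4 := hmass N
    linarith
  refine ⟨hb0nn, hbpos, fun z hz => ?_⟩
  have hzρ : ∀ n, 0 < ρ n + z := fun n => by linarith [hρp n]
  set g : ℕ → ℝ := fun n => ρ n / (ρ n + z) with hgdef
  have hg0 : ∀ n, 0 < g n := fun n => div_pos (hρp n) (hzρ n)
  have hg1 : ∀ n, g n ≤ 1 := fun n => by
    simp only [hgdef]
    rw [div_le_one (hzρ n)]
    linarith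
  have hfin : ∀ N, ∏ k ∈ range N, ((1 + z / ζ (k+1)) / (1 + z / ρ k))
      = A0 N + ∑ n ∈ range N, aN ρ ζ n N * g n :=
    fun N => finPF ρ ζ hζpos hinter hinter' N z hz.le
  have hsummable_ag : Summable (fun n => a n * g n) := by
    refine Summable.of_nonneg_of_le (fun n => (mul_pos (hapos n) (hg0 n)).le)
      (fun n => ?_) hsummable_a
    nth_rewrite 2 [← mul_one (a n)]
    exact mul_le_mul_of_nonneg_left (hg1 n) (hapos n).le
  set S : ℝ := ∑' n, a n * g n with hSdef
  have hsum_tend : Tendsto (fun N => ∑ n ∈ range N, a n * g n) atTop (nhds S) :=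
    hsummable_ag.hasSum.tendsto_sum_nat
  have hD_tend : Tendsto (fun N => (∑ n ∈ range N, a n) - (1 - A0 N)) atTop (nhds 0) := by
    have h1 : Tendsto (fun N => ∑ n ∈ range N, a n) atTop (nhds (1 - L)) := by
      have h2 := hsummable_a.hasSum.tendsto_sum_nat
      rwa [htsum_a] at h2
    have h3 := h1.sub ((tendsto_const_nhds (x := (1:ℝ))).sub hA0L)
    simpa using h3
  have hup : ∀ N, ∏ k ∈ range N, ((1 + z / ζ (k+1)) / (1 + z / ρ k))
      ≤ A0 N + ∑ n ∈ range N, a n * g n := by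
    intro N
    rw [hfin N]
    refine add_le_add (le_refl _) (Finset.sum_le_sum fun n hn => ?_)
    exact mul_le_mul_of_nonneg_right (haN_le n N (Finset.mem_range.1 hn)) (hg0 n).le
  have hlow : ∀ N, A0 N + ∑ n ∈ range N, a n * g n - ((∑ n ∈ range N, a n) - (1 - A0 N))
      ≤ ∏ k ∈ range N, ((1 + z / ζ (k+1)) / (1 + z / ρ k)) := by
    intro N
    rw [hfin N]
    have h1 : ∑ n ∈ range N, (a n - aN ρ ζ n N) * g n ≤ ∑ n ∈ range N, (a n - aN ρ ζ n N) := by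
      refine Finset.sum_le_sum fun n hn => ?_
      have h2 : 0 ≤ a n - aN ρ ζ n N := sub_nonneg.2 (haN_le n N (Finset.mem_range.1 hn))
      nth_rewrite 2 [← mul_one (a n - aN ρ ζ n N)]
      exact mul_le_mul_of_nonneg_left (hg1 n) h2
    have h3 : ∑ n ∈ range N, (a n - aN ρ ζ n N) = (∑ n ∈ range N, a n) - (1 - A0 N) := by
      rw [Finset.sum_sub_distrib]
      have h4 := hmass N
      linarith
    have h5 : ∑ n ∈ range N, (a n - aN ρ ζ n N) * g n
        = (∑ n ∈ range N, a n * g n) - ∑ n ∈ range N, aN ρ ζ n N * g n := by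
      rw [← Finset.sum_sub_distrib]
      exact Finset.sum_congr rfl fun n _ => by ring
    rw [h5, h3] at h1
    linarith
  have hψ_tend : Tendsto (fun N => ∏ k ∈ range N, ((1 + z / ζ (k+1)) / (1 + z / ρ k))) atTop
      (nhds (L + S)) := by
    refine tendsto_of_tendsto_of_tendsto_of_le_of_le ?_ (hA0L.add hsum_tend) hlow hup
    have h6 := (hA0L.add hsum_tend).sub hD_tend
    simpa using h6
  -- the infinite product
  set f : ℕ → ℝ := fun k => (1 + z / ρ k) / (1 + z / ζ k) with hfdef
  have hfpos : ∀ k, 0 < f k := by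
    intro k
    have h1 := hρp k
    have h2 := hζpos k
    simp only [hfdef]
    have h3 : 0 < 1 + z / ρ k := by have := div_pos hz h1; linarith
    have h4 : 0 < 1 + z / ζ k := by have := div_pos hz h2; linarith
    exact div_pos h3 h4
  have hfb : ∀ k, |f k - 1| ≤ z * (1 / ζ k - 1 / ζ (k+1)) := by
    intro k
    have hζk := hζpos k
    have hρk := hρp k
    have hd : 0 < 1 + z / ζ k := by positivity
    have he : f k - 1 = (z / ρ k - z / ζ k) / (1 + z / ζ k) := by
      have h := sub_div (1 + z / ρ k) (1 + z / ζ k) (1 + z / ζ k)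
      rw [div_self hd.ne'] at h
      simp only [hfdef]
      rw [← h]
      congr 1
      ring
    have hnum : z / ρ k ≤ z / ζ k := div_le_div_of_nonneg_left hz.le hζk (hinter k).le
    rw [he, abs_div, abs_of_nonpos (by linarith), abs_of_pos hd, neg_sub]
    have h1 : (z / ζ k - z / ρ k) / (1 + z / ζ k) ≤ (z / ζ k - z / ρ k) / 1 := by
      refine div_le_div_of_nonneg_left (by linarith) (by norm_num) ?_
      have : 0 ≤ z / ζ k := by positivity
      linarith
    have h2 : 1 / ζ (k+1) ≤ 1 / ρ k := one_div_le_one_div_of_le hρk (hinter' k).le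
    have h3 : z * (1 / ζ (k+1)) ≤ z * (1 / ρ k) := mul_le_mul_of_nonneg_left h2 hz.le
    calc (z / ζ k - z / ρ k) / (1 + z / ζ k) ≤ (z / ζ k - z / ρ k) / 1 := h1
      _ = z * (1 / ζ k) - z * (1 / ρ k) := by ring
      _ ≤ z * (1 / ζ k - 1 / ζ (k+1)) := by rw [mul_sub]; linarith
  have hlogf : Summable fun k => Real.log (f k) :=
    aux_summable_log ((sumT ρ ζ hζpos hinter hinter').mul_left z) (Eventually.of_forall hfb)
  have hProdf : HasProd f (Real.exp (∑' k, Real.log (f k))) := aux_hasProd_exp f hfpos hlogf.hasSum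
  set E : ℝ := Real.exp (∑' k, Real.log (f k)) with hEdef
  have hEpos : 0 < E := Real.exp_pos _
  have hFn : Tendsto (fun N => ∏ k ∈ range N, f k) atTop (nhds E) := hProdf.tendsto_prod_nat
  have hInv : Tendsto (fun N => ∏ k ∈ range N, ((1 + z / ζ k) / (1 + z / ρ k))) atTop
      (nhds E⁻¹) := by
    have h := hFn.inv₀ hEpos.ne'
    refine h.congr fun N => ?_
    rw [← Finset.prod_inv_distrib]
    refine Finset.prod_congr rfl fun k _ => ?_
    simp only [hfdef]
    rw [inv_div]
  have htel : ∀ N, (∏ k ∈ range N, ((1 + z / ζ k) / (1 + z / ρ k))) * (1 + z / ζ N)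
      = (1 + z / ζ 0) * ∏ k ∈ range N, ((1 + z / ζ (k+1)) / (1 + z / ρ k)) := by
    intro N
    induction N with
    | zero => simp
    | succ N ih =>
      rw [Finset.prod_range_succ, Finset.prod_range_succ]
      have e : (∏ k ∈ range N, ((1 + z / ζ k) / (1 + z / ρ k))) * ((1 + z / ζ N) / (1 + z / ρ N))
            * (1 + z / ζ (N+1))
          = ((∏ k ∈ range N, ((1 + z / ζ k) / (1 + z / ρ k))) * (1 + z / ζ N))
            * ((1 + z / ζ (N+1)) / (1 + z / ρ N)) := by
        ring
      rw [e, ih]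
      ring
  have hTelTend : Tendsto (fun N => (∏ k ∈ range N, ((1 + z / ζ k) / (1 + z / ρ k))) * (1 + z / ζ N))
      atTop (nhds (E⁻¹ * 1)) := by
    refine hInv.mul ?_
    have h := (tendsto_const_nhds (x := z)).div_atTop hζtop
    have h2 := (tendsto_const_nhds (x := (1:ℝ))).add h
    simpa using h2
  have hTelTend2 : Tendsto (fun N => (1 + z / ζ 0) * ∏ k ∈ range N, ((1 + z / ζ (k+1)) / (1 + z / ρ k)))
      atTop (nhds ((1 + z / ζ 0) * (L + S))) := hψ_tend.const_mul _
  have hkey : E⁻¹ = (1 + z / ζ 0) * (L + S) := by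
    have h := tendsto_nhds_unique ((hTelTend.congr fun N => htel N)) hTelTend2
    rwa [mul_one] at h
  have hterm : ∀ n, (1 + z / ζ 0) * (a n * g n) = a n + b n * (1 - ρ n / (ρ n + z)) := by
    intro n
    have hb_eq : b n = a n * (ρ n / ζ 0 - 1) := by
      simp only [hadef]
      rw [div_mul_cancel₀ _ (hρζ0 n).ne']
    rw [hb_eq]
    simp only [hgdef]
    have h1 := (hzρ n).ne'
    have h2 := hζ0.ne'
    field_simp
    ring
  have hsummable_bt : Summable (fun n => b n * (1 - ρ n / (ρ n + z))) := by
    have h1 : Summable (fun n => (1 + z / ζ 0) * (a n * g n) - a n) :=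
      (hsummable_ag.mul_left _).sub hsummable_a
    exact h1.congr fun n => by rw [hterm n]; ring
  have htsum_split : ∑' n, (1 + z / ζ 0) * (a n * g n)
      = (∑' n, a n) + ∑' n, b n * (1 - ρ n / (ρ n + z)) := by
    rw [← Summable.tsum_add hsummable_a hsummable_bt]
    exact tsum_congr fun n => by rw [hterm n]
  rw [hProdf.tprod_eq, one_div, hkey, mul_add]
  have h5 : (1 + z / ζ 0) * S = ∑' n, (1 + z / ζ 0) * (a n * g n) := by
    rw [hSdef, ← tsum_mul_left]
  rw [h5, htsum_split, htsum_a]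
  have h6 : (1 + z / ζ 0) * L = L + z * b0 := by
    rw [hLdef]
    field_simp
  rw [h6]
  ring
end

section
/- Let ρ, ζ be interlacing positive increasing sequences with ρ_n → ∞, a_0 and (a_n)_{n≥1} the coefficients of the partial fraction decomposition φ(z) = a_0 + Σ_{n≥1} a_n ζ_n/(ζ_n+z). Then φ(0) = 1, i.e. a_0 + Σ_{n≥1} a_n = 1; in particular the measure a_0 δ_0(dx) + Σ_{n≥1} a_n ζ_n e^{-ζ_n x} dx on [0,∞) is a probability measure. -/
open Real Filter Finset MeasureTheory Set

lemma prod_neg_aux (s : Finset ℕ) (c : ℕ → ℝ) :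
    ∏ k ∈ s, (-c k) = (-1) ^ s.card * ∏ k ∈ s, c k := by
  rw [← Finset.prod_const (-1 : ℝ), ← Finset.prod_mul_distrib]
  exact Finset.prod_congr rfl fun k _ => by ring

open Polynomial in
lemma lagrange_key (x y : ℕ → ℝ) (N : ℕ) (hinj : Set.InjOn x ↑(Finset.range N)) :
    (∏ k ∈ Finset.range N, y k) - ∏ k ∈ Finset.range N, x k
      = ∑ n ∈ Finset.range N, (∏ k ∈ Finset.range N, (y k - x n)) *
          ∏ k ∈ (Finset.range N).erase n, (x k / (x k - x n)) := by
  rcases Nat.eq_zero_or_pos N with h0 | hN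
  · subst h0; simp
  set P : ℝ[X] := ∏ k ∈ Finset.range N, (X - C (y k)) with hP
  set Q : ℝ[X] := ∏ k ∈ Finset.range N, (X - C (x k)) with hQ
  have hPm : P.Monic := monic_prod_of_monic _ _ fun k _ => monic_X_sub_C _
  have hQm : Q.Monic := monic_prod_of_monic _ _ fun k _ => monic_X_sub_C _
  have hPd : P.natDegree = N := by
    rw [hP, natDegree_prod _ _ fun k _ => X_sub_C_ne_zero (y k)]
    simp [natDegree_X_sub_C]
  have hQd : Q.natDegree = N := by
    rw [hQ, natDegree_prod _ _ fun k _ => X_sub_C_ne_zero (x k)]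
    simp [natDegree_X_sub_C]
  have hdegeq : P.degree = Q.degree := by
    rw [degree_eq_natDegree hPm.ne_zero, degree_eq_natDegree hQm.ne_zero, hPd, hQd]
  have hdeg : (P - Q).degree < (Finset.range N).card := by
    have := degree_sub_lt hdegeq hPm.ne_zero (by rw [hPm.leadingCoeff, hQm.leadingCoeff])
    rw [degree_eq_natDegree hPm.ne_zero, hPd] at this
    simpa using this
  have key := congrArg (Polynomial.eval 0)
    (Lagrange.eq_interpolate (v := x) hinj hdeg)
  rw [Lagrange.interpolate_apply, hP, hQ] at key
  simp only [eval_sub, eval_prod, eval_sub, eval_X, eval_C, eval_finset_sum, eval_mul] at key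
  have hbasis : ∀ n ∈ Finset.range N,
      Polynomial.eval 0 (Lagrange.basis (Finset.range N) x n)
        = ∏ k ∈ (Finset.range N).erase n, (x k / (x k - x n)) := by
    intro n hn
    rw [Lagrange.basis, eval_prod]
    refine Finset.prod_congr rfl fun k hk => ?_
    rw [Lagrange.basisDivisor, eval_mul, eval_C, eval_sub, eval_X, eval_C, inv_mul_eq_div,
      show (0 : ℝ) - x k = -(x k) by ring, show x n - x k = -(x k - x n) by ring, neg_div_neg_eq]
  have hnode : ∀ n ∈ Finset.range N,
      (∏ k ∈ Finset.range N, (x n - y k)) - ∏ k ∈ Finset.range N, (x n - x k)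
        = (-1) ^ N * ∏ k ∈ Finset.range N, (y k - x n) := by
    intro n hn
    rw [Finset.prod_eq_zero (f := fun k => x n - x k) hn (sub_self (x n)), sub_zero,
      show (fun k => x n - y k) = fun k => -(y k - x n) by funext k; ring,
      prod_neg_aux, Finset.card_range]
  rw [Finset.sum_congr rfl (fun n hn => by rw [hbasis n hn, hnode n hn, mul_assoc])] at key
  rw [show (fun k => (0:ℝ) - y k) = fun k => -(y k) by funext k; ring,
    show (fun k => (0:ℝ) - x k) = fun k => -(x k) by funext k; ring,
    prod_neg_aux, prod_neg_aux, Finset.card_range] at key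
  apply mul_left_cancel₀ (pow_ne_zero N (neg_ne_zero.mpr (one_ne_zero (α := ℝ))))
  rw [mul_sub, Finset.mul_sum]
  exact key

lemma finite_identity (x y : ℕ → ℝ) (hx : ∀ k, 0 < x k) (hxy : ∀ k, x k < y k)
    (hmono : StrictMono x) (N : ℕ) :
    (∏ k ∈ Finset.range N, (x k / y k))
      + ∑ n ∈ Finset.range N, (1 - x n / y n) *
          ∏ k ∈ (Finset.range N).erase n, ((1 - x n / y k) / (1 - x n / x k)) = 1 := by
  have hy : ∀ k, 0 < y k := fun k => (hx k).trans (hxy k)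
  have hy0 : ∀ k, y k ≠ 0 := fun k => (hy k).ne'
  have hx0 : ∀ k, x k ≠ 0 := fun k => (hx k).ne'
  have hinj : Set.InjOn x ↑(Finset.range N) := hmono.injective.injOn
  have key := lagrange_key x y N hinj
  have hterm : ∀ n ∈ Finset.range N,
      (1 - x n / y n) * ∏ k ∈ (Finset.range N).erase n, ((1 - x n / y k) / (1 - x n / x k))
        = ((∏ k ∈ Finset.range N, (y k - x n)) *
            ∏ k ∈ (Finset.range N).erase n, (x k / (x k - x n)))
            / ∏ k ∈ Finset.range N, y k := by
    intro n hn
    have e1 : ∀ k ∈ (Finset.range N).erase n,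
        (1 - x n / y k) / (1 - x n / x k) = ((y k - x n) / y k) * (x k / (x k - x n)) := by
      intro k hk
      have hkn : k ≠ n := (Finset.mem_erase.mp hk).1
      have hxkn : x k - x n ≠ 0 := sub_ne_zero.mpr (hmono.injective.ne hkn)
      rw [one_sub_div (hy0 k), one_sub_div (hx0 k), div_div_div_eq, div_mul_div_comm]
    rw [Finset.prod_congr rfl e1, Finset.prod_mul_distrib, one_sub_div (hy0 n), ← mul_assoc,
      Finset.mul_prod_erase (Finset.range N) (fun k => (y k - x n) / y k) hn,
      Finset.prod_div_distrib, div_mul_eq_mul_div]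
  rw [Finset.sum_congr rfl hterm, ← Finset.sum_div, ← key, Finset.prod_div_distrib]
  have hYne : (∏ k ∈ Finset.range N, y k) ≠ 0 :=
    Finset.prod_ne_zero_iff.mpr fun k _ => hy0 k
  field_simp
  ring

lemma integral_exp_neg_mul' {b : ℝ} (hb : 0 < b) :
    ∫ x in Ioi (0:ℝ), Real.exp (-b * x) = 1 / b := by
  have h := integral_comp_mul_left_Ioi (fun u => Real.exp (-u)) 0 hb
  simp only [mul_zero, integral_exp_neg_Ioi_zero, smul_eq_mul, mul_one] at h
  rw [show (fun x : ℝ => Real.exp (-b * x)) = fun x => Real.exp (-(b * x)) by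
    funext x; rw [neg_mul]]
  rw [h, one_div]

lemma measure_part (ζ : ℕ → ℝ) (a0 : ℝ) (a : ℕ → ℝ)
    (hζpos : ∀ n, 0 < ζ n) (hapos : ∀ n, 0 ≤ a n) (ha0nn : 0 ≤ a0)
    (hasum : Summable a) (hsum1 : a0 + ∑' n, a n = 1) :
    IsProbabilityMeasure
        ((ENNReal.ofReal a0) • Measure.dirac (0 : ℝ) +
          volume.withDensity (fun x => ENNReal.ofReal
            (Set.indicator (Ici (0 : ℝ))
              (fun y => ∑' n, a n * ζ n * Real.exp (-(ζ n) * y)) x))) := by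
  constructor
  rw [Measure.add_apply, Measure.smul_apply, smul_eq_mul,
    Measure.dirac_apply_of_mem (Set.mem_univ 0), mul_one,
    withDensity_apply _ MeasurableSet.univ, Measure.restrict_univ]
  have hind : (fun x => ENNReal.ofReal ((Ici (0:ℝ)).indicator
        (fun y => ∑' n, a n * ζ n * Real.exp (-(ζ n) * y)) x))
      = (Ici (0:ℝ)).indicator
        (fun x => ENNReal.ofReal (∑' n, a n * ζ n * Real.exp (-(ζ n) * x))) := by
    funext x
    by_cases h : x ∈ Ici (0:ℝ) <;> simp [h]
  rw [hind, lintegral_indicator measurableSet_Ici _, ← restrict_Ioi_eq_restrict_Ici]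
  have hGsum : ∀ x : ℝ, 0 < x → Summable (fun n => a n * ζ n * Real.exp (-(ζ n) * x)) := by
    intro x hx
    refine Summable.of_nonneg_of_le (fun n => mul_nonneg (mul_nonneg (hapos n) (hζpos n).le) (Real.exp_pos _).le) (fun n => ?_)
      (hasum.mul_right x⁻¹)
    have h1 : ζ n * x ≤ Real.exp (ζ n * x) :=
      le_trans (by linarith) (Real.add_one_le_exp _)
    have h2 : Real.exp (-(ζ n) * x) ≤ (ζ n * x)⁻¹ := by
      rw [neg_mul, Real.exp_neg]
      exact inv_anti₀ (mul_pos (hζpos n) hx) h1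
    calc a n * ζ n * Real.exp (-(ζ n) * x) ≤ a n * ζ n * (ζ n * x)⁻¹ := by
          apply mul_le_mul_of_nonneg_left h2 (mul_nonneg (hapos n) (hζpos n).le)
      _ = a n * x⁻¹ := by
          rw [mul_inv, mul_assoc, ← mul_assoc (ζ n), mul_inv_cancel₀ (hζpos n).ne', one_mul]
  have hcongr : ∫⁻ x in Ioi (0:ℝ),
      ENNReal.ofReal (∑' n, a n * ζ n * Real.exp (-(ζ n) * x))
      = ∫⁻ x in Ioi (0:ℝ), ∑' n, ENNReal.ofReal (a n * ζ n * Real.exp (-(ζ n) * x)) := by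
    refine setLIntegral_congr_fun measurableSet_Ioi (fun x hx => ?_)
    exact ENNReal.ofReal_tsum_of_nonneg (fun n => mul_nonneg (mul_nonneg (hapos n) (hζpos n).le) (Real.exp_pos _).le) (hGsum x hx)
  rw [hcongr, lintegral_tsum fun n => (Measurable.aemeasurable (by fun_prop))]
  have hint : ∀ n, ∫⁻ x in Ioi (0:ℝ), ENNReal.ofReal (a n * ζ n * Real.exp (-(ζ n) * x))
      = ENNReal.ofReal (a n) := by
    intro n
    rw [← ofReal_integral_eq_lintegral_ofReal
      (((exp_neg_integrableOn_Ioi 0 (hζpos n)).const_mul (a n * ζ n)))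
      (Filter.Eventually.of_forall fun x => mul_nonneg (mul_nonneg (hapos n) (hζpos n).le) (Real.exp_pos _).le)]
    congr 1
    rw [integral_const_mul, integral_exp_neg_mul' (hζpos n)]
    rw [mul_one_div, mul_div_assoc, div_self (hζpos n).ne', mul_one]
  simp_rw [hint]
  rw [← ENNReal.ofReal_tsum_of_nonneg hapos hasum, ← ENNReal.ofReal_add ha0nn
    (tsum_nonneg hapos), hsum1, ENNReal.ofReal_one]

/-- Total mass identity: with the partial-fraction coefficients of the interlacing product,
`a₀ + Σₙ aₙ = 1`; in particular `a₀ δ₀(dx) + Σₙ aₙ ζₙ e^{-ζₙ x} dx` on `[0,∞)` is a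
probability measure. -/
theorem interlacing_partial_fraction_total_mass
    (ρ ζ : ℕ → ℝ) (a0 : ℝ) (a : ℕ → ℝ)
    (hζpos : ∀ n, 0 < ζ n)
    (hinter : ∀ n, ζ n < ρ n) (hinter' : ∀ n, ρ n < ζ (n + 1))
    (hρtop : Tendsto ρ atTop atTop)
    (ha0 : Tendsto (fun n => ∏ k ∈ range n, ζ k / ρ k) atTop (nhds a0))
    (ha : ∀ n, a n = (1 - ζ n / ρ n) *
      ∏' k : {k : ℕ // k ≠ n}, (1 - ζ n / ρ (k : ℕ)) / (1 - ζ n / ζ (k : ℕ))) :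
    a0 + ∑' n, a n = 1 ∧
      IsProbabilityMeasure
        ((ENNReal.ofReal a0) • Measure.dirac (0 : ℝ) +
          volume.withDensity (fun x => ENNReal.ofReal
            (Set.indicator (Ici (0 : ℝ))
              (fun y => ∑' n, a n * ζ n * Real.exp (-(ζ n) * y)) x))) := by
  have hζmono : StrictMono ζ := strictMono_nat_of_lt_succ fun n => (hinter n).trans (hinter' n)
  have hρpos : ∀ k, 0 < ρ k := fun k => (hζpos k).trans (hinter k)
  set f : ℕ → ℕ → ℝ := fun n k => (1 - ζ n / ρ k) / (1 - ζ n / ζ k) with hf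
  set g : ℕ → ℕ → ℝ := fun n k => if k = n then 0 else Real.log (f n k) with hg
  -- positivity of factors
  have hdenpos : ∀ n k, n < k → 0 < 1 - ζ n / ζ k := fun n k h =>
    sub_pos.mpr ((div_lt_one (hζpos k)).mpr (hζmono h))
  have hfpos : ∀ n k, k ≠ n → 0 < f n k := by
    intro n k hk
    rcases lt_or_gt_of_ne hk with h | h
    · have h1 : ρ k < ζ n := lt_of_lt_of_le (hinter' k) (hζmono.monotone (Nat.succ_le_of_lt h))
      have hnum : 1 - ζ n / ρ k < 0 := sub_neg.mpr ((one_lt_div (hρpos k)).mpr h1)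
      have hden : 1 - ζ n / ζ k < 0 := sub_neg.mpr ((one_lt_div (hζpos k)).mpr (hζmono h))
      exact div_pos_of_neg_of_neg hnum hden
    · have hnum : 0 < 1 - ζ n / ρ k :=
        sub_pos.mpr ((div_lt_one (hρpos k)).mpr ((hζmono h).trans (hinter k)))
      exact div_pos hnum (hdenpos n k h)
  have hfge1 : ∀ n k, n < k → 1 ≤ f n k := by
    intro n k h
    rw [le_div_iff₀ (hdenpos n k h), one_mul]
    have h2 : ζ n / ρ k ≤ ζ n / ζ k := by
      apply div_le_div_of_nonneg_left (hζpos n).le (hζpos k) (hinter k).le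
    linarith
  have hgnn : ∀ n k, n < k → 0 ≤ g n k := by
    intro n k h
    simp only [hg]
    rw [if_neg (ne_of_gt h)]
    exact Real.log_nonneg (hfge1 n k h)
  -- summability of the logs
  have htel : Summable (fun k => 1 / ζ k - 1 / ζ (k + 1)) := by
    apply summable_of_sum_range_le (c := 1 / ζ 0)
    · intro k
      have h1 : 1 / ζ (k + 1) ≤ 1 / ζ k :=
        one_div_le_one_div_of_le (hζpos k) (hζmono (Nat.lt_succ_self k)).le
      linarith
    · intro n
      rw [Finset.sum_range_sub' (fun k => 1 / ζ k)]
      have : (0:ℝ) ≤ 1 / ζ n := le_of_lt (one_div_pos.mpr (hζpos n))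
      linarith
  have hgsummable : ∀ n, Summable (g n) := by
    intro n
    rw [← summable_nat_add_iff (n + 1)]
    have hc : 0 < 1 - ζ n / ζ (n + 1) := hdenpos n (n + 1) (Nat.lt_succ_self n)
    apply Summable.of_nonneg_of_le (fun k => hgnn n _ (by omega))
      (fun k => ?_) (((summable_nat_add_iff (n + 1)).mpr htel).mul_left
        (ζ n / (1 - ζ n / ζ (n + 1))))
    set m := k + (n + 1) with hm
    have hnm : n < m := by omega
    have hden : 0 < 1 - ζ n / ζ m := hdenpos n m hnm
    have hbound : f n m - 1 ≤ ζ n / (1 - ζ n / ζ (n + 1)) * (1 / ζ m - 1 / ζ (m + 1)) := by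
      have hdenc : 1 - ζ n / ζ (n + 1) ≤ 1 - ζ n / ζ m := by
        have : ζ n / ζ m ≤ ζ n / ζ (n + 1) :=
          div_le_div_of_nonneg_left (hζpos n).le (hζpos (n + 1))
            (hζmono.monotone (by omega : n + 1 ≤ m))
        linarith
      have hfm : f n m - 1 = (ζ n / ζ m - ζ n / ρ m) / (1 - ζ n / ζ m) := by
        simp only [hf]
        rw [div_sub_one hden.ne']
        congr 1
        ring
      have hnum_nn : 0 ≤ ζ n / ζ m - ζ n / ρ m := by
        have : ζ n / ρ m ≤ ζ n / ζ m :=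
          div_le_div_of_nonneg_left (hζpos n).le (hζpos m) (hinter m).le
        linarith
      have hnum_le : ζ n / ζ m - ζ n / ρ m ≤ ζ n * (1 / ζ m - 1 / ζ (m + 1)) := by
        have h3 : ζ n / ζ (m + 1) ≤ ζ n / ρ m :=
          div_le_div_of_nonneg_left (hζpos n).le (hρpos m) (hinter' m).le
        rw [mul_sub, mul_one_div, mul_one_div]
        linarith
      rw [hfm]
      calc (ζ n / ζ m - ζ n / ρ m) / (1 - ζ n / ζ m)
          ≤ (ζ n / ζ m - ζ n / ρ m) / (1 - ζ n / ζ (n + 1)) :=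
            div_le_div_of_nonneg_left hnum_nn hc hdenc
        _ ≤ (ζ n * (1 / ζ m - 1 / ζ (m + 1))) / (1 - ζ n / ζ (n + 1)) :=
            (div_le_div_iff_of_pos_right hc).mpr hnum_le
        _ = ζ n / (1 - ζ n / ζ (n + 1)) * (1 / ζ m - 1 / ζ (m + 1)) := by ring
    have hgm : g n m = Real.log (f n m) := by
      simp only [hg]
      rw [if_neg (ne_of_gt hnm)]
    rw [hgm]
    exact le_trans (Real.log_le_sub_one_of_pos (hfpos n m (ne_of_gt hnm))) hbound
  -- indicator identification
  have hind : ∀ n, ({k : ℕ | k ≠ n}).indicator (fun k => Real.log (f n k)) = g n := by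
    intro n
    funext k
    by_cases h : k = n
    · simp [Set.indicator, h, hg]
    · simp [Set.indicator, h, hg]
  have hsub : ∀ n, Summable (fun k : {k : ℕ // k ≠ n} => Real.log (f n (k : ℕ))) := by
    intro n
    exact (summable_subtype_iff_indicator (s := {k : ℕ | k ≠ n})
      (f := fun k => Real.log (f n k))).mpr (by rw [hind n]; exact hgsummable n)
  have htprod : ∀ n, (∏' k : {k : ℕ // k ≠ n}, f n (k : ℕ)) = Real.exp (∑' k, g n k) := by
    intro n
    have h2 := Real.rexp_tsum_eq_tprod (f := fun k : {k : ℕ // k ≠ n} => f n (k : ℕ))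
      (fun k => hfpos n (k : ℕ) k.2) (hsub n)
    rw [← h2]
    congr 1
    have h3 : (∑' k : {k : ℕ // k ≠ n}, Real.log (f n (k : ℕ)))
        = ∑' k : ℕ, ({k : ℕ | k ≠ n}).indicator (fun k => Real.log (f n k)) k :=
      tsum_subtype {k : ℕ | k ≠ n} (fun k => Real.log (f n k))
    rw [h3, hind n]
  have haexp : ∀ n, a n = (1 - ζ n / ρ n) * Real.exp (∑' k, g n k) := by
    intro n
    rw [ha n, ← htprod n]
  have hcoef : ∀ n, 0 ≤ 1 - ζ n / ρ n := fun n => by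
    have := (div_lt_one (hρpos n)).mpr (hinter n); linarith
  have hFexp : ∀ n N, (∏ k ∈ (Finset.range N).erase n, f n k)
      = Real.exp (∑ k ∈ Finset.range N, g n k) := by
    intro n N
    rw [Real.exp_sum, ← Finset.prod_erase (Finset.range N)
      (show Real.exp (g n n) = 1 by simp [hg])]
    refine Finset.prod_congr rfl fun k hk => ?_
    have hkn := (Finset.mem_erase.mp hk).1
    rw [show g n k = Real.log (f n k) by simp only [hg]; rw [if_neg hkn],
      Real.exp_log (hfpos n k hkn)]
  have hFnn : ∀ n N, 0 ≤ (1 - ζ n / ρ n) * ∏ k ∈ (Finset.range N).erase n, f n k := by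
    intro n N; rw [hFexp]; exact mul_nonneg (hcoef n) (Real.exp_pos _).le
  have hapos : ∀ n, 0 ≤ a n := fun n => by
    rw [haexp n]; exact mul_nonneg (hcoef n) (Real.exp_pos _).le
  have hFle : ∀ n N, n < N →
      (1 - ζ n / ρ n) * ∏ k ∈ (Finset.range N).erase n, f n k ≤ a n := by
    intro n N hnN
    rw [haexp n, hFexp]
    refine mul_le_mul_of_nonneg_left (Real.exp_le_exp.mpr ?_) (hcoef n)
    have h2 : 0 ≤ ∑' k, g n (k + N) := tsum_nonneg fun k => hgnn n _ (by omega)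
    have h3 := Summable.sum_add_tsum_nat_add (f := g n) N (hgsummable n)
    linarith
  have hFtend : ∀ n, Tendsto
      (fun N => (1 - ζ n / ρ n) * ∏ k ∈ (Finset.range N).erase n, f n k)
      atTop (nhds (a n)) := by
    intro n
    rw [haexp n]
    have h1 : Tendsto (fun N => ∑ k ∈ Finset.range N, g n k) atTop (nhds (∑' k, g n k)) :=
      (hgsummable n).hasSum.tendsto_sum_nat
    have h3 := ((Real.continuous_exp.tendsto _).comp h1).const_mul (1 - ζ n / ρ n)
    exact h3.congr fun N => by rw [Function.comp_apply, ← hFexp n N]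
  have hfin : ∀ N, (∏ k ∈ Finset.range N, (ζ k / ρ k))
      + ∑ n ∈ Finset.range N, (1 - ζ n / ρ n) * ∏ k ∈ (Finset.range N).erase n, f n k = 1 :=
    fun N => finite_identity ζ ρ hζpos hinter hζmono N
  set P : ℕ → ℝ := fun N => ∏ k ∈ Finset.range N, (ζ k / ρ k) with hP
  have hPnn : ∀ N, 0 ≤ P N :=
    fun N => Finset.prod_nonneg fun k _ => le_of_lt (div_pos (hζpos k) (hρpos k))
  have hPanti : Antitone P := antitone_nat_of_succ_le fun N => by
    have h0 : P (N + 1) = P N * (ζ N / ρ N) := Finset.prod_range_succ _ N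
    have h1 : ζ N / ρ N ≤ 1 := le_of_lt ((div_lt_one (hρpos N)).mpr (hinter N))
    nlinarith [hPnn N]
  have hPge : ∀ N, a0 ≤ P N := fun N => hPanti.le_of_tendsto ha0 N
  have ha0nn : 0 ≤ a0 := ge_of_tendsto' ha0 hPnn
  have hbound : ∀ M, ∑ n ∈ Finset.range M, a n ≤ 1 - a0 := by
    intro M
    have h1 : Tendsto (fun N => ∑ n ∈ Finset.range M,
        ((1 - ζ n / ρ n) * ∏ k ∈ (Finset.range N).erase n, f n k)) atTop
        (nhds (∑ n ∈ Finset.range M, a n)) :=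
      tendsto_finset_sum _ fun n _ => hFtend n
    refine le_of_tendsto h1 ?_
    filter_upwards [eventually_ge_atTop M] with N hMN
    calc ∑ n ∈ Finset.range M, ((1 - ζ n / ρ n) * ∏ k ∈ (Finset.range N).erase n, f n k)
        ≤ ∑ n ∈ Finset.range N, ((1 - ζ n / ρ n) * ∏ k ∈ (Finset.range N).erase n, f n k) :=
          Finset.sum_le_sum_of_subset_of_nonneg (Finset.range_subset_range.mpr hMN)
            fun n _ _ => hFnn n N
      _ = 1 - P N := by have := hfin N; linarith
      _ ≤ 1 - a0 := by have := hPge N; linarith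
  have hasum : Summable a := summable_of_sum_range_le hapos hbound
  have htsum_le : ∑' n, a n ≤ 1 - a0 := Real.tsum_le_of_sum_range_le hapos hbound
  have htsum_ge : 1 - a0 ≤ ∑' n, a n := by
    refine le_of_tendsto (ha0.const_sub 1) ?_
    filter_upwards with N
    calc 1 - P N
        = ∑ n ∈ Finset.range N, ((1 - ζ n / ρ n) * ∏ k ∈ (Finset.range N).erase n, f n k) := by
          have := hfin N; linarith
      _ ≤ ∑ n ∈ Finset.range N, a n :=
          Finset.sum_le_sum fun n hn => hFle n N (Finset.mem_range.mp hn)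
      _ ≤ ∑' n, a n := Summable.sum_le_tsum _ (fun n _ => hapos n) hasum
  refine ⟨by linarith, ?_⟩
  exact measure_part ζ a0 a hζpos hapos ha0nn hasum (by linarith)
end
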